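/- arXiv:1712.06744 — 8 statements merged into one kernel-verified Lean document; each statement's English description precedes it below -/
import Mathlib

section
/- Let (p_n) and (q_n) be weight sequences with p_0 > 0, q_0 > 0, p_n, q_n ≥ 0, and suppose both ∑ p_n = P and ∑ q_n = Q converge. Let (k_n) be the unique sequence determined by the convolution equations q_n = ∑_{ν=0}^n k_ν p_{n−ν}. If ∑ |k_n| < ∞, then every sequence that is (N,p)-convergent to σ is also (N,q)-convergent to σ. -/
open Filter Finset

/-- `s` is (N,p)-convergent to `σ`. -/
def NorlundConv (p s : ℕ → ℝ) (σ : ℝ) : Prop :=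
  Tendsto (fun m => (∑ n ∈ Finset.range (m + 1), p (m - n) * s n) /
    (∑ k ∈ Finset.range (m + 1), p k)) atTop (nhds σ)

/-- Triangle double sums commute. -/
lemma sum_triangle_comm {M : Type*} [AddCommMonoid M] (m : ℕ) (f : ℕ → ℕ → M) :
    ∑ n ∈ range (m + 1), ∑ ν ∈ range (m - n + 1), f n ν =
      ∑ ν ∈ range (m + 1), ∑ n ∈ range (m - ν + 1), f n ν := by
  rw [Finset.sum_sigma', Finset.sum_sigma']
  refine Finset.sum_nbij' (fun x => ⟨x.2, x.1⟩) (fun x => ⟨x.2, x.1⟩) ?_ ?_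
    (fun _ _ => rfl) (fun _ _ => rfl) (fun _ _ => rfl) <;>
  simp only [Finset.mem_sigma, Finset.mem_range, Sigma.forall] <;>
  intro a b <;> omega

/-- Convolution with an ℓ¹ sequence maps null sequences to null sequences. -/
lemma conv_null {k u : ℕ → ℝ} (hk : Summable fun n => |k n|)
    (hu : Tendsto u atTop (nhds 0)) :
    Tendsto (fun m => ∑ j ∈ range (m + 1), k (m - j) * u j) atTop (nhds 0) := by
  obtain ⟨C, hC⟩ := (hu.abs.bddAbove_range).imp (fun C hC => fun n => hC (Set.mem_range_self n))
  have hC0 : 0 ≤ C := le_trans (abs_nonneg _) (hC 0)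
  set K := ∑' n, |k n| with hKdef
  have hK0 : 0 ≤ K := tsum_nonneg fun n => abs_nonneg _
  have hk0 : Tendsto (fun n => |k n|) atTop (nhds 0) := hk.tendsto_atTop_zero
  rw [Metric.tendsto_atTop]
  intro ε hε
  have hε2 : 0 < ε / (2 * (K + 1)) := by positivity
  obtain ⟨N, hN⟩ := (Metric.tendsto_atTop.mp hu) (ε / (2 * (K + 1))) hε2
  -- the "head" part tends to 0
  have hg : Tendsto (fun m => (C + 1) * ∑ j ∈ range N, |k (m - j)|) atTop (nhds 0) := by
    have : Tendsto (fun m => ∑ j ∈ range N, |k (m - j)|) atTop (nhds 0) := by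
      have h0 : (0 : ℝ) = ∑ j ∈ range N, (0 : ℝ) := by simp
      rw [h0]
      refine tendsto_finset_sum _ (fun j _ => ?_)
      exact hk0.comp (tendsto_sub_atTop_nat j)
    simpa using this.const_mul (C + 1)
  obtain ⟨M, hM⟩ := (Metric.tendsto_atTop.mp hg) (ε / 2) (by positivity)
  refine ⟨max M N, fun m hm => ?_⟩
  have hmM : M ≤ m := le_trans (le_max_left _ _) hm
  have hmN : N ≤ m := le_trans (le_max_right _ _) hm
  rw [Real.dist_eq, sub_zero]
  have hsplit : range (m + 1) = range N ∪ Ico N (m + 1) := by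
    rw [Finset.range_eq_Ico, Finset.range_eq_Ico, Finset.Ico_union_Ico_eq_Ico (Nat.zero_le _) (by omega)]
  have habs : |∑ j ∈ range (m + 1), k (m - j) * u j| ≤
      ∑ j ∈ range N, |k (m - j)| * |u j| + ∑ j ∈ Ico N (m + 1), |k (m - j)| * |u j| := by
    rw [hsplit, Finset.sum_union (by
      rw [Finset.range_eq_Ico]; exact Finset.Ico_disjoint_Ico_consecutive 0 N (m+1))]
    refine le_trans (abs_add_le _ _) (add_le_add ?_ ?_) <;>
      exact le_trans (Finset.abs_sum_le_sum_abs _ _) (le_of_eq (by simp [abs_mul]))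
  have h1 : ∑ j ∈ range N, |k (m - j)| * |u j| ≤ (C + 1) * ∑ j ∈ range N, |k (m - j)| := by
    rw [Finset.mul_sum]
    refine Finset.sum_le_sum fun j _ => ?_
    rw [mul_comm ((C:ℝ)+1)]
    exact mul_le_mul_of_nonneg_left (le_trans (hC j) (by linarith)) (abs_nonneg _)
  have h1' : (C + 1) * ∑ j ∈ range N, |k (m - j)| < ε / 2 := by
    have := hM m hmM
    rw [Real.dist_eq, sub_zero] at this
    exact lt_of_le_of_lt (le_abs_self _) this
  have h2 : ∑ j ∈ Ico N (m + 1), |k (m - j)| * |u j| ≤ ε / (2 * (K + 1)) * K := by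
    have step : ∑ j ∈ Ico N (m + 1), |k (m - j)| * |u j| ≤
        ε / (2 * (K + 1)) * ∑ j ∈ Ico N (m + 1), |k (m - j)| := by
      rw [Finset.mul_sum]
      refine Finset.sum_le_sum fun j hj => ?_
      rw [mul_comm (ε / (2 * (K + 1)))]
      have hjN : N ≤ j := (Finset.mem_Ico.mp hj).1
      have := hN j hjN
      rw [Real.dist_eq, sub_zero] at this
      exact mul_le_mul_of_nonneg_left (this.le) (abs_nonneg _)
    refine le_trans step (mul_le_mul_of_nonneg_left ?_ hε2.le)
    have hsub : ∑ j ∈ Ico N (m + 1), |k (m - j)| ≤ ∑ j ∈ range (m + 1), |k (m - j)| := by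
      refine Finset.sum_le_sum_of_subset_of_nonneg ?_ (fun _ _ _ => abs_nonneg _)
      rw [Finset.range_eq_Ico]; exact Finset.Ico_subset_Ico (Nat.zero_le _) le_rfl
    refine le_trans hsub ?_
    have hrefl : ∑ j ∈ range (m + 1), |k (m - j)| = ∑ j ∈ range (m + 1), |k j| := by
      have := Finset.sum_range_reflect (fun i => |k i|) (m + 1)
      simpa using this
    rw [hrefl]
    exact hk.sum_le_tsum _ (fun n _ => abs_nonneg _)
  have h2' : ε / (2 * (K + 1)) * K < ε / 2 := by
    rw [div_mul_eq_mul_div, div_lt_div_iff₀ (by positivity) (by norm_num)]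
    nlinarith
  calc |∑ j ∈ range (m + 1), k (m - j) * u j|
      ≤ ∑ j ∈ range N, |k (m - j)| * |u j| + ∑ j ∈ Ico N (m + 1), |k (m - j)| * |u j| := habs
    _ < ε / 2 + ε / 2 := by
        refine add_lt_add_of_lt_of_le (lt_of_le_of_lt h1 h1') (le_trans h2 h2'.le)
    _ = ε := by ring

theorem norlund_inclusion_of_summable_comparison (p q k : ℕ → ℝ)
    (hp0 : 0 < p 0) (hq0 : 0 < q 0)
    (hpn : ∀ n, 0 ≤ p n) (hqn : ∀ n, 0 ≤ q n)
    (hP : Summable p) (hQ : Summable q)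
    (hk : ∀ n, q n = ∑ ν ∈ Finset.range (n + 1), k ν * p (n - ν))
    (hksum : Summable fun n => |k n|) :
    ∀ (s : ℕ → ℝ) (σ : ℝ), NorlundConv p s σ → NorlundConv q s σ := by
  intro s σ hps
  -- partial sums
  set Pm : ℕ → ℝ := fun m => ∑ i ∈ range (m + 1), p i with hPm
  set Qm : ℕ → ℝ := fun m => ∑ i ∈ range (m + 1), q i with hQm
  have hPmpos : ∀ m, 0 < Pm m := fun m =>
    lt_of_lt_of_le hp0 (Finset.single_le_sum (fun i _ => hpn i) (by simp))
  have hQmpos : ∀ m, 0 < Qm m := fun m =>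
    lt_of_lt_of_le hq0 (Finset.single_le_sum (fun i _ => hqn i) (by simp))
  -- convolution identity for arbitrary v
  have key : ∀ (v : ℕ → ℝ) (m : ℕ),
      ∑ n ∈ range (m + 1), q (m - n) * v n =
        ∑ j ∈ range (m + 1), k (m - j) * ∑ n ∈ range (j + 1), p (j - n) * v n := by
    intro v m
    have rhs : ∑ j ∈ range (m + 1), k (m - j) * ∑ n ∈ range (j + 1), p (j - n) * v n
        = ∑ j ∈ range (m + 1), k j * ∑ n ∈ range (m - j + 1), p (m - j - n) * v n := by
      have step : ∑ j ∈ range (m + 1), k (m - j) * ∑ n ∈ range (j + 1), p (j - n) * v n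
          = ∑ j ∈ range (m + 1), k (m - j) *
              ∑ n ∈ range (m - (m - j) + 1), p (m - (m - j) - n) * v n := by
        refine Finset.sum_congr rfl fun j hj => ?_
        rw [Nat.sub_sub_self (Nat.lt_succ_iff.mp (Finset.mem_range.mp hj))]
      rw [step]
      simpa using Finset.sum_range_reflect
        (fun j => k j * ∑ n ∈ range (m - j + 1), p (m - j - n) * v n) (m + 1)
    rw [rhs]
    calc ∑ n ∈ range (m + 1), q (m - n) * v n
        = ∑ n ∈ range (m + 1), ∑ ν ∈ range (m - n + 1), k ν * p (m - n - ν) * v n := by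
          refine Finset.sum_congr rfl fun n hn => ?_
          rw [hk (m - n), Finset.sum_mul]
      _ = ∑ ν ∈ range (m + 1), ∑ n ∈ range (m - ν + 1), k ν * p (m - n - ν) * v n :=
          sum_triangle_comm m _
      _ = ∑ j ∈ range (m + 1), k j * ∑ n ∈ range (m - j + 1), p (m - j - n) * v n := by
          refine Finset.sum_congr rfl fun ν hν => ?_
          rw [Finset.mul_sum]
          refine Finset.sum_congr rfl fun n hn => ?_
          have hn' : n ≤ m - ν := Nat.lt_succ_iff.mp (Finset.mem_range.mp hn)
          have hν' : ν ≤ m := Nat.lt_succ_iff.mp (Finset.mem_range.mp hν)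
          have : m - n - ν = m - ν - n := by omega
          rw [this]; ring
  -- Qm m = ∑ k (m-j) * Pm j
  have keyQ : ∀ m, Qm m = ∑ j ∈ range (m + 1), k (m - j) * Pm j := by
    intro m
    have h1 : Qm m = ∑ n ∈ range (m + 1), q (m - n) * (1 : ℝ) := by
      simp only [mul_one, hQm]
      exact (Finset.sum_range_reflect (fun i => q i) (m + 1)).symm
    rw [h1, key (fun _ => 1) m]
    refine Finset.sum_congr rfl fun j _ => ?_
    congr 1
    simp only [mul_one, hPm]
    exact Finset.sum_range_reflect (fun i => p i) (j + 1)
  -- the null sequence u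
  set u : ℕ → ℝ := fun m => (∑ n ∈ range (m + 1), p (m - n) * s n) - σ * Pm m with hu
  have hu0 : Tendsto u atTop (nhds 0) := by
    have h1 : Tendsto (fun m =>
        ((∑ n ∈ range (m + 1), p (m - n) * s n) / Pm m - σ)) atTop (nhds 0) := by
      simpa using hps.sub (tendsto_const_nhds (x := σ))
    have h2 : Tendsto Pm atTop (nhds (∑' n, p n)) :=
      (hP.hasSum.tendsto_sum_nat).comp (tendsto_add_atTop_nat 1)
    have h3 := h1.mul h2
    rw [zero_mul] at h3
    refine h3.congr fun m => ?_
    field_simp [hu, (hPmpos m).ne']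
    ring
  -- conv of k with u tends to 0
  have hconv : Tendsto (fun m => ∑ j ∈ range (m + 1), k (m - j) * u j) atTop (nhds 0) :=
    conv_null hksum hu0
  -- main identity
  have main : ∀ m, (∑ n ∈ range (m + 1), q (m - n) * s n) / Qm m =
      (∑ j ∈ range (m + 1), k (m - j) * u j) / Qm m + σ := by
    intro m
    have hnum : ∑ n ∈ range (m + 1), q (m - n) * s n =
        (∑ j ∈ range (m + 1), k (m - j) * u j) + σ * Qm m := by
      rw [key s m, keyQ m, Finset.mul_sum]
      rw [← Finset.sum_add_distrib]
      refine Finset.sum_congr rfl fun j _ => ?_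
      simp only [hu]
      ring
    rw [hnum, add_div, mul_div_assoc, div_self (hQmpos m).ne', mul_one]
  -- conclusion
  have hQlim : Tendsto Qm atTop (nhds (∑' n, q n)) :=
    (hQ.hasSum.tendsto_sum_nat).comp (tendsto_add_atTop_nat 1)
  have hQpos : 0 < ∑' n, q n := lt_of_lt_of_le hq0 (hQ.le_tsum 0 (fun i _ => hqn i))
  have hdiv : Tendsto (fun m => (∑ j ∈ range (m + 1), k (m - j) * u j) / Qm m)
      atTop (nhds 0) := by
    have := hconv.div hQlim hQpos.ne'
    rw [zero_div] at this; exact this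
  have := hdiv.add (tendsto_const_nhds (x := σ))
  rw [zero_add] at this
  unfold NorlundConv
  exact this.congr fun m => (main m).symm
end

section
/- Let (p_n), (q_n) be weight sequences with p_0, q_0 > 0, p_n, q_n ≥ 0, and ∑ p_n, ∑ q_n both convergent. Let (k_n) be defined by q_n = ∑_{ν=0}^n k_ν p_{n−ν}. If the Nörlund method (N,q) includes (N,p) (i.e., every (N,p)-convergent sequence is (N,q)-convergent to the same limit), then ∑ |k_n| < ∞. -/
open Filter Finset ZeroAtInfty

/-- Coefficient of a product of power series as a range sum with reflected first index. -/
lemma coeff_mk_mul (f : ℕ → ℝ) (φ : PowerSeries ℝ) (m : ℕ) :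
    (PowerSeries.coeff m) (PowerSeries.mk f * φ) =
      ∑ n ∈ Finset.range (m + 1), f (m - n) * (PowerSeries.coeff n) φ := by
  rw [PowerSeries.coeff_mul, Finset.Nat.sum_antidiagonal_eq_sum_range_succ_mk]
  simp only [PowerSeries.coeff_mk]
  have := Finset.sum_range_reflect
    (fun i => f (m - i) * (PowerSeries.coeff i) φ) (m + 1)
  simp only [Nat.add_sub_cancel] at this
  rw [← this]
  refine Finset.sum_congr rfl fun i hi => ?_
  have hi' : i ≤ m := Nat.lt_succ_iff.mp (Finset.mem_range.mp hi)
  rw [Nat.sub_sub_self hi']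

/-- Solve the convolution equation `∑_{i≤n} p (n-i) * s i = c n` recursively. -/
noncomputable def solveConv (p c : ℕ → ℝ) : ℕ → ℝ
  | n => (c n - ∑ i ∈ (Finset.range n).attach, p (n - i.1) * solveConv p c i.1) / p 0
  decreasing_by exact Finset.mem_range.mp i.2

lemma solveConv_spec (p c : ℕ → ℝ) (hp : p 0 ≠ 0) (n : ℕ) :
    ∑ i ∈ Finset.range (n + 1), p (n - i) * solveConv p c i = c n := by
  rw [Finset.sum_range_succ, Nat.sub_self]
  rw [solveConv]
  rw [Finset.sum_attach (Finset.range n) (fun i => p (n - i) * solveConv p c i)]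
  field_simp
  ring

theorem summable_comparison_of_norlund_inclusion (p q k : ℕ → ℝ)
    (hp0 : 0 < p 0) (hq0 : 0 < q 0)
    (hpn : ∀ n, 0 ≤ p n) (hqn : ∀ n, 0 ≤ q n)
    (hP : Summable p) (hQ : Summable q)
    (hk : ∀ n, q n = ∑ ν ∈ Finset.range (n + 1), k ν * p (n - ν))
    (hincl : ∀ (s : ℕ → ℝ) (σ : ℝ), NorlundConv p s σ → NorlundConv q s σ) :
    Summable fun n => |k n| := by
  classical
  set P : ℕ → ℝ := fun m => ∑ i ∈ Finset.range (m + 1), p i with hPdef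
  set Q : ℕ → ℝ := fun m => ∑ i ∈ Finset.range (m + 1), q i with hQdef
  have hPpos : ∀ m, 0 < P m := by
    intro m
    have : p 0 ≤ P m :=
      Finset.single_le_sum (f := p) (fun i _ => hpn i) (Finset.mem_range.mpr (Nat.succ_pos m))
    linarith
  have hQpos : ∀ m, 0 < Q m := by
    intro m
    have : q 0 ≤ Q m :=
      Finset.single_le_sum (f := q) (fun i _ => hqn i) (Finset.mem_range.mpr (Nat.succ_pos m))
    linarith
  have hQle : ∀ m, Q m ≤ ∑' n, q n := fun m =>
    hQ.sum_le_tsum (Finset.range (m + 1)) (fun i _ => hqn i)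
  -- the key convolution identity: q * s = k * (p * s)
  have hconv : ∀ (s : ℕ → ℝ) (m : ℕ),
      ∑ n ∈ Finset.range (m + 1), q (m - n) * s n =
        ∑ n ∈ Finset.range (m + 1),
          k (m - n) * (∑ i ∈ Finset.range (n + 1), p (n - i) * s i) := by
    intro s m
    have hQP : PowerSeries.mk q = PowerSeries.mk k * PowerSeries.mk p := by
      ext n
      rw [PowerSeries.coeff_mk, PowerSeries.coeff_mul,
        Finset.Nat.sum_antidiagonal_eq_sum_range_succ_mk]
      simpa using hk n
    calc ∑ n ∈ Finset.range (m + 1), q (m - n) * s n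
        = ∑ n ∈ Finset.range (m + 1),
            q (m - n) * (PowerSeries.coeff n) (PowerSeries.mk s) := by
          simp [PowerSeries.coeff_mk]
      _ = (PowerSeries.coeff m) (PowerSeries.mk q * PowerSeries.mk s) :=
          (coeff_mk_mul q _ m).symm
      _ = (PowerSeries.coeff m)
            (PowerSeries.mk k * (PowerSeries.mk p * PowerSeries.mk s)) := by
          rw [hQP, mul_assoc]
      _ = ∑ n ∈ Finset.range (m + 1),
            k (m - n) * (PowerSeries.coeff n) (PowerSeries.mk p * PowerSeries.mk s) :=
          coeff_mk_mul k _ m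
      _ = ∑ n ∈ Finset.range (m + 1),
            k (m - n) * (∑ i ∈ Finset.range (n + 1), p (n - i) * s i) := by
          refine Finset.sum_congr rfl fun n _ => ?_
          rw [coeff_mk_mul]
          simp [PowerSeries.coeff_mk]
  -- the family of continuous linear functionals on C₀(ℕ, ℝ)
  have hnorm_pt : ∀ (t : C₀(ℕ, ℝ)) (n : ℕ), |t n| ≤ ‖t‖ := by
    intro t n
    exact t.toBCF.norm_coe_le_norm n
  have key : ∀ m : ℕ, ∃ L : C₀(ℕ, ℝ) →L[ℝ] ℝ,
      (∀ t : C₀(ℕ, ℝ), L t = ∑ n ∈ Finset.range (m + 1), (k (m - n) * P n / Q m) * t n) := by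
    intro m
    set c : ℕ → ℝ := fun n => k (m - n) * P n / Q m with hc
    refine ⟨LinearMap.mkContinuous
      { toFun := fun t => ∑ n ∈ Finset.range (m + 1), c n * t n
        map_add' := by
          intro t u
          simp [mul_add, Finset.sum_add_distrib]
        map_smul' := by
          intro r t
          simp [Finset.mul_sum, mul_left_comm] }
      (∑ n ∈ Finset.range (m + 1), |c n|) ?_, fun t => rfl⟩
    intro t
    simp only [LinearMap.coe_mk, AddHom.coe_mk]
    calc ‖∑ n ∈ Finset.range (m + 1), c n * t n‖
        ≤ ∑ n ∈ Finset.range (m + 1), ‖c n * t n‖ := norm_sum_le _ _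
      _ ≤ ∑ n ∈ Finset.range (m + 1), |c n| * ‖t‖ := by
          refine Finset.sum_le_sum fun n _ => ?_
          rw [norm_mul]
          exact mul_le_mul_of_nonneg_left (hnorm_pt t n) (abs_nonneg _)
      _ = (∑ n ∈ Finset.range (m + 1), |c n|) * ‖t‖ := by rw [Finset.sum_mul]
  choose L hL using key
  -- pointwise boundedness of the family
  have hptwise : ∀ t : C₀(ℕ, ℝ), ∃ C, ∀ m, ‖L m t‖ ≤ C := by
    intro t
    have ht : Tendsto (fun n => t n) atTop (nhds 0) := by
      have := t.zero_at_infty'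
      rwa [cocompact_eq_atTop (α := ℕ)] at this
    set s : ℕ → ℝ := solveConv p (fun n => P n * t n) with hs
    have hss : ∀ n, ∑ i ∈ Finset.range (n + 1), p (n - i) * s i = P n * t n :=
      fun n => solveConv_spec p _ (ne_of_gt hp0) n
    have hNp : NorlundConv p s 0 := by
      unfold NorlundConv
      have : ∀ m : ℕ, (∑ n ∈ Finset.range (m + 1), p (m - n) * s n) /
          (∑ i ∈ Finset.range (m + 1), p i) = t m := by
        intro m
        have hPm : (∑ i ∈ Finset.range (m + 1), p i) = P m := rfl
        rw [hss m, hPm, mul_comm, mul_div_assoc, div_self (ne_of_gt (hPpos m)), mul_one]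
      simpa only [this] using ht
    have hNq : NorlundConv q s 0 := hincl s 0 hNp
    have heq : ∀ m, L m t = (∑ n ∈ Finset.range (m + 1), q (m - n) * s n) /
        (∑ i ∈ Finset.range (m + 1), q i) := by
      intro m
      rw [hL m t, hconv s m]
      rw [Finset.sum_div]
      refine Finset.sum_congr rfl fun n hn => ?_
      rw [hss n]
      field_simp
      ring
    have hLt : Tendsto (fun m => L m t) atTop (nhds 0) := by
      simpa only [heq, NorlundConv] using hNq
    have hbdd : BddAbove (Set.range fun m => ‖L m t‖) := hLt.norm.bddAbove_range
    obtain ⟨C, hC⟩ := hbdd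
    exact ⟨C, fun m => hC (Set.mem_range_self m)⟩
  obtain ⟨C', hC'⟩ := banach_steinhaus hptwise
  have hC0 : 0 ≤ C' := le_trans (norm_nonneg _) (hC' 0)
  -- test against sign vectors to bound the row sums
  have hrow : ∀ m, ∑ n ∈ Finset.range (m + 1), |k (m - n)| * P n / Q m ≤ C' := by
    intro m
    set f : ℕ → ℝ := fun n => if n ≤ m then (if k (m - n) < 0 then -1 else 1) else 0 with hf
    have hzero : Tendsto f (cocompact ℕ) (nhds 0) := by
      rw [cocompact_eq_atTop (α := ℕ)]
      refine Tendsto.congr' ?_ (tendsto_const_nhds : Tendsto (fun _ : ℕ => (0:ℝ)) _ _)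
      filter_upwards [eventually_gt_atTop m] with n hn
      simp [hf, Nat.not_le.mpr hn]
    set u : C₀(ℕ, ℝ) := ⟨⟨f, continuous_of_discreteTopology⟩, hzero⟩ with hu
    have hun : ∀ n, u n = f n := fun n => rfl
    have hu_norm : ‖u‖ ≤ 1 := by
      show ‖u.toBCF‖ ≤ 1
      refine (BoundedContinuousFunction.norm_le zero_le_one).mpr fun n => ?_
      have : u.toBCF n = f n := rfl
      rw [this]
      simp only [hf, Real.norm_eq_abs]
      split_ifs <;> simp
    have hLmu : L m u = ∑ n ∈ Finset.range (m + 1), |k (m - n)| * P n / Q m := by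
      rw [hL m u]
      refine Finset.sum_congr rfl fun n hn => ?_
      have hn' : n ≤ m := Nat.lt_succ_iff.mp (Finset.mem_range.mp hn)
      rw [hun n, hf]
      simp only [if_pos hn']
      rcases lt_or_ge (k (m - n)) 0 with h | h
      · rw [if_pos h, abs_of_neg h]; ring
      · rw [if_neg (not_lt.mpr h), abs_of_nonneg h]; ring
    calc ∑ n ∈ Finset.range (m + 1), |k (m - n)| * P n / Q m
        = L m u := hLmu.symm
      _ ≤ ‖L m u‖ := le_abs_self _
      _ ≤ ‖L m‖ * ‖u‖ := (L m).le_opNorm u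
      _ ≤ C' * 1 := mul_le_mul (hC' m) hu_norm (norm_nonneg _) hC0
      _ = C' := mul_one _
  -- deduce a uniform bound on partial sums of |k|
  have hkb : ∀ m, ∑ n ∈ Finset.range (m + 1), |k n| ≤ C' * (∑' n, q n) / p 0 := by
    intro m
    have h1 : ∑ n ∈ Finset.range (m + 1), |k (m - n)| * P n ≤ C' * Q m := by
      have h := hrow m
      rw [← Finset.sum_div] at h
      have := (div_le_iff₀ (hQpos m)).mp h
      linarith [this]
    have h2 : p 0 * ∑ n ∈ Finset.range (m + 1), |k (m - n)| ≤
        ∑ n ∈ Finset.range (m + 1), |k (m - n)| * P n := by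
      rw [Finset.mul_sum]
      refine Finset.sum_le_sum fun n _ => ?_
      have hPn : p 0 ≤ P n :=
        Finset.single_le_sum (f := p) (fun i _ => hpn i) (Finset.mem_range.mpr (Nat.succ_pos n))
      rw [mul_comm]
      exact mul_le_mul_of_nonneg_left hPn (abs_nonneg _)
    have h3 : ∑ n ∈ Finset.range (m + 1), |k (m - n)| =
        ∑ n ∈ Finset.range (m + 1), |k n| := by
      have := Finset.sum_range_reflect (fun n => |k n|) (m + 1)
      simpa using this
    have h4 : C' * Q m ≤ C' * ∑' n, q n := mul_le_mul_of_nonneg_left (hQle m) hC0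
    rw [le_div_iff₀ hp0]
    calc (∑ n ∈ Finset.range (m + 1), |k n|) * p 0
        = p 0 * ∑ n ∈ Finset.range (m + 1), |k (m - n)| := by rw [h3, mul_comm]
      _ ≤ ∑ n ∈ Finset.range (m + 1), |k (m - n)| * P n := h2
      _ ≤ C' * Q m := h1
      _ ≤ C' * ∑' n, q n := h4
  refine summable_of_sum_range_le (c := C' * (∑' n, q n) / p 0) (fun n => abs_nonneg _) fun m => ?_
  calc ∑ n ∈ Finset.range m, |k n|
      ≤ ∑ n ∈ Finset.range (m + 1), |k n| :=
        Finset.sum_le_sum_of_subset_of_nonneg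
          (Finset.range_subset_range.mpr (Nat.le_succ m)) (fun i _ _ => abs_nonneg _)
    _ ≤ C' * (∑' n, q n) / p 0 := hkb m
end

section
/- Let (p_n), (q_n) be finite Nörlund weight sequences (p_0, q_0 > 0, nonnegative terms, convergent sums), with comparison sequences (k_n) and (l_n) defined by q = k * p and p = l * q (convolutions). Then (N,p) and (N,q) are equivalent (each includes the other) if and only if both ∑ |k_n| < ∞ and ∑ |l_n| < ∞. -/
open Filter Finset

open ZeroAtInftyContinuousMap ZeroAtInfty

lemma bounded_of_tendsto {u : ℕ → ℝ} {a : ℝ} (h : Tendsto u atTop (nhds a)) :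
    ∃ C, ∀ m, |u m| ≤ C := by
  have h2 : Tendsto (fun m => |u m|) atTop (nhds |a|) := h.abs
  have hb : BddAbove (Set.range fun m => |u m|) := h2.bddAbove_range
  obtain ⟨C, hC⟩ := hb
  exact ⟨C, fun m => hC (Set.mem_range_self m)⟩

lemma conv_tendsto_zero {a e : ℕ → ℝ} (ha : Summable a) (ha0 : ∀ n, 0 ≤ a n)
    (he0 : ∀ n, 0 ≤ e n) {M : ℝ} (heM : ∀ n, e n ≤ M)
    (he : Tendsto e atTop (nhds 0)) :
    Tendsto (fun m => ∑ ν ∈ range (m + 1), a ν * e (m - ν)) atTop (nhds 0) := by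
  have hK0 : (0:ℝ) ≤ ∑' n, a n := tsum_nonneg ha0
  set K := ∑' n, a n with hKdef
  have hM0 : (0:ℝ) ≤ M := le_trans (he0 0) (heM 0)
  rw [Metric.tendsto_atTop]
  intro ε hε
  have hδ1 : (0:ℝ) < ε / (2 * (K + 1)) := by positivity
  have hδ2 : (0:ℝ) < ε / (2 * (M + 1)) := by positivity
  obtain ⟨N, hN⟩ := (Metric.tendsto_atTop.mp he) (ε / (2 * (K + 1))) hδ1
  obtain ⟨N₁, hN₁⟩ := (Metric.tendsto_atTop.mp ha.hasSum.tendsto_sum_nat) (ε / (2 * (M + 1))) hδ2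
  refine ⟨N + N₁, fun m hm => ?_⟩
  have hmN : N ≤ m := le_trans (Nat.le_add_right _ _) hm
  have hsplit : ∑ ν ∈ range (m + 1), a ν * e (m - ν)
      = (∑ ν ∈ Finset.Ico 0 (m - N + 1), a ν * e (m - ν))
        + ∑ ν ∈ Finset.Ico (m - N + 1) (m + 1), a ν * e (m - ν) := by
    rw [range_eq_Ico, ← Finset.sum_Ico_consecutive (fun ν => a ν * e (m - ν))
      (Nat.zero_le (m - N + 1)) (by omega : m - N + 1 ≤ m + 1)]
  have h1 : ∑ ν ∈ Finset.Ico 0 (m - N + 1), a ν * e (m - ν)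
      ≤ K * (ε / (2 * (K + 1))) := by
    calc ∑ ν ∈ Finset.Ico 0 (m - N + 1), a ν * e (m - ν)
        ≤ ∑ ν ∈ Finset.Ico 0 (m - N + 1), a ν * (ε / (2 * (K + 1))) := by
          refine Finset.sum_le_sum fun ν hν => ?_
          have hν' : ν ≤ m - N := by
            have := (Finset.mem_Ico.mp hν).2; omega
          have hjN : N ≤ m - ν := by omega
          have := hN (m - ν) hjN
          rw [Real.dist_eq, sub_zero] at this
          have hee : e (m - ν) ≤ ε / (2 * (K + 1)) := le_of_lt
            (lt_of_le_of_lt (le_abs_self _) this)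
          exact mul_le_mul_of_nonneg_left hee (ha0 ν)
      _ = (∑ ν ∈ Finset.Ico 0 (m - N + 1), a ν) * (ε / (2 * (K + 1))) := by
          rw [Finset.sum_mul]
      _ ≤ K * (ε / (2 * (K + 1))) := by
          apply mul_le_mul_of_nonneg_right _ (le_of_lt hδ1)
          rw [← range_eq_Ico]
          exact ha.sum_le_tsum _ (fun i _ => ha0 i)
  have h2 : ∑ ν ∈ Finset.Ico (m - N + 1) (m + 1), a ν * e (m - ν)
      ≤ (ε / (2 * (M + 1))) * M := by
    calc ∑ ν ∈ Finset.Ico (m - N + 1) (m + 1), a ν * e (m - ν)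
        ≤ ∑ ν ∈ Finset.Ico (m - N + 1) (m + 1), a ν * M := by
          refine Finset.sum_le_sum fun ν hν => mul_le_mul_of_nonneg_left (heM _) (ha0 ν)
      _ = (∑ ν ∈ Finset.Ico (m - N + 1) (m + 1), a ν) * M := by rw [Finset.sum_mul]
      _ ≤ (ε / (2 * (M + 1))) * M := by
          apply mul_le_mul_of_nonneg_right _ hM0
          have hsum : ∑ ν ∈ Finset.Ico (m - N + 1) (m + 1), a ν
              = (∑ ν ∈ range (m + 1), a ν) - ∑ ν ∈ range (m - N + 1), a ν := by
            rw [range_eq_Ico, ← Finset.sum_Ico_consecutive (fun ν => a ν)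
              (Nat.zero_le (m - N + 1)) (by omega : m - N + 1 ≤ m + 1)]
            rw [← range_eq_Ico]
            ring
          have htail := hN₁ (m - N + 1) (by omega)
          rw [Real.dist_eq] at htail
          have hle : ∑ ν ∈ range (m + 1), a ν ≤ K := ha.sum_le_tsum _ (fun i _ => ha0 i)
          have := abs_lt.mp htail
          rw [hsum]
          linarith [this.1, this.2]
  have hnn : (0:ℝ) ≤ ∑ ν ∈ range (m + 1), a ν * e (m - ν) :=
    Finset.sum_nonneg fun ν _ => mul_nonneg (ha0 ν) (he0 _)
  rw [Real.dist_eq, sub_zero, abs_of_nonneg hnn]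
  have hfin : K * (ε / (2 * (K + 1))) + (ε / (2 * (M + 1))) * M < ε := by
    have hK1 : (0:ℝ) < K + 1 := by linarith
    have hM1 : (0:ℝ) < M + 1 := by linarith
    have e1 : (K + 1) * (ε / (2 * (K + 1))) = ε / 2 := by field_simp
    have e2 : (ε / (2 * (M + 1))) * (M + 1) = ε / 2 := by field_simp
    have c1 : K * (ε / (2 * (K + 1))) < ε / 2 := by
      have := mul_lt_mul_of_pos_right (lt_add_one K) hδ1
      linarith
    have c2 : (ε / (2 * (M + 1))) * M < ε / 2 := by
      have := mul_lt_mul_of_pos_left (lt_add_one M) hδ2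
      linarith
    linarith
  calc ∑ ν ∈ range (m + 1), a ν * e (m - ν)
      ≤ K * (ε / (2 * (K + 1))) + (ε / (2 * (M + 1))) * M := by rw [hsplit]; linarith
    _ < ε := hfin

lemma norlund_conv_sum {p q k : ℕ → ℝ}
    (hk : ∀ n, q n = ∑ ν ∈ range (n + 1), k ν * p (n - ν)) (s : ℕ → ℝ) (m : ℕ) :
    ∑ n ∈ range (m + 1), q (m - n) * s n
      = ∑ ν ∈ range (m + 1), k ν * ∑ n ∈ range (m - ν + 1), p (m - ν - n) * s n := by
  calc ∑ n ∈ range (m + 1), q (m - n) * s n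
      = ∑ n ∈ range (m + 1), ∑ ν ∈ range (m - n + 1), k ν * p (m - n - ν) * s n := by
        refine Finset.sum_congr rfl fun n hn => ?_
        rw [hk (m - n), Finset.sum_mul]
    _ = ∑ ν ∈ range (m + 1), ∑ n ∈ range (m - ν + 1), k ν * p (m - n - ν) * s n := by
        refine Finset.sum_comm' ?_
        intro x y
        simp only [Finset.mem_range]
        omega
    _ = ∑ ν ∈ range (m + 1), k ν * ∑ n ∈ range (m - ν + 1), p (m - ν - n) * s n := by
        refine Finset.sum_congr rfl fun ν _ => ?_
        rw [Finset.mul_sum]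
        refine Finset.sum_congr rfl fun n _ => ?_
        have h : m - n - ν = m - ν - n := by omega
        rw [h]; ring

lemma norlund_Q_eq {p q k : ℕ → ℝ}
    (hk : ∀ n, q n = ∑ ν ∈ range (n + 1), k ν * p (n - ν)) (m : ℕ) :
    ∑ i ∈ range (m + 1), q i
      = ∑ ν ∈ range (m + 1), k ν * ∑ i ∈ range (m - ν + 1), p i := by
  have h := norlund_conv_sum hk (fun _ => 1) m
  simp only [mul_one] at h
  have h1 : ∑ n ∈ range (m + 1), q (m - n) = ∑ i ∈ range (m + 1), q i := by
    have := Finset.sum_range_reflect (fun i => q i) (m + 1)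
    simpa using this
  have h2 : ∀ ν, ∑ n ∈ range (m - ν + 1), p (m - ν - n) = ∑ i ∈ range (m - ν + 1), p i := by
    intro ν
    have := Finset.sum_range_reflect (fun i => p i) (m - ν + 1)
    simpa using this
  rw [← h1, h]
  exact Finset.sum_congr rfl fun ν _ => by rw [h2 ν]

noncomputable def buildS (p t : ℕ → ℝ) : ℕ → ℝ
  | m => ((∑ i ∈ Finset.range (m + 1), p i) * t m
      - ∑ n ∈ (Finset.range m).attach, p (m - n.1) * buildS p t n.1) / p 0
  decreasing_by exact Finset.mem_range.mp n.2

lemma buildS_spec {p : ℕ → ℝ} (hp0 : p 0 ≠ 0) (t : ℕ → ℝ) (m : ℕ) :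
    ∑ n ∈ range (m + 1), p (m - n) * buildS p t n
      = (∑ i ∈ range (m + 1), p i) * t m := by
  rw [Finset.sum_range_succ, Nat.sub_self]
  have hunf : buildS p t m = ((∑ i ∈ Finset.range (m + 1), p i) * t m
      - ∑ n ∈ (Finset.range m).attach, p (m - n.1) * buildS p t n.1) / p 0 := by
    rw [buildS]
  rw [hunf]
  rw [mul_div_cancel₀ _ hp0]
  rw [← Finset.sum_attach (range m) (fun n => p (m - n) * buildS p t n)]
  ring

lemma norlund_incl_of_summable (p q k : ℕ → ℝ)
    (hp0 : 0 < p 0) (hq0 : 0 < q 0)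
    (hpn : ∀ n, 0 ≤ p n) (hqn : ∀ n, 0 ≤ q n)
    (hP : Summable p)
    (hk : ∀ n, q n = ∑ ν ∈ range (n + 1), k ν * p (n - ν))
    (hks : Summable fun n => |k n|) :
    ∀ s σ, NorlundConv p s σ → NorlundConv q s σ := by
  intro s σ h
  set P : ℕ → ℝ := fun m => ∑ i ∈ range (m + 1), p i with hPdef
  set Q : ℕ → ℝ := fun m => ∑ i ∈ range (m + 1), q i with hQdef
  have hPm : ∀ m, 0 < P m := fun m => lt_of_lt_of_le hp0 (by
    refine Finset.single_le_sum (fun i _ => hpn i) ?_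
    simp)
  have hQm : ∀ m, q 0 ≤ Q m := fun m => by
    refine Finset.single_le_sum (fun i _ => hqn i) ?_
    simp
  have hPsum : ∀ m, P m ≤ ∑' i, p i := fun m => hP.sum_le_tsum _ (fun i _ => hpn i)
  set Ps : ℝ := ∑' i, p i with hPs
  have hPs0 : 0 < Ps := lt_of_lt_of_le (hPm 0) (hPsum 0)
  set t : ℕ → ℝ := fun m => (∑ n ∈ range (m + 1), p (m - n) * s n) / P m with htdef
  have ht : Tendsto t atTop (nhds σ) := h
  have hnum : ∀ m, ∑ n ∈ range (m + 1), p (m - n) * s n = P m * t m := fun m => by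
    rw [htdef]
    simp only
    rw [mul_comm, div_mul_eq_mul_div, mul_div_assoc, div_self (ne_of_gt (hPm m)), mul_one]
  -- numerator identity for q
  have hqnum : ∀ m, ∑ n ∈ range (m + 1), q (m - n) * s n
      = ∑ ν ∈ range (m + 1), k ν * (P (m - ν) * t (m - ν)) := by
    intro m
    rw [norlund_conv_sum hk s m]
    exact Finset.sum_congr rfl fun ν _ => by rw [hnum (m - ν)]
  set e : ℕ → ℝ := fun j => |t j - σ| with hedef
  have he : Tendsto e atTop (nhds 0) := by
    have h0 : Tendsto (fun j => t j - σ) atTop (nhds 0) := by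
      simpa using ht.sub (tendsto_const_nhds (x := σ))
    simpa using h0.abs
  obtain ⟨M, hM⟩ := bounded_of_tendsto he
  have heM : ∀ j, e j ≤ M := fun j => le_trans (le_abs_self _) (hM j)
  have he0 : ∀ j, 0 ≤ e j := fun j => abs_nonneg _
  set v : ℕ → ℝ := fun m => ∑ ν ∈ range (m + 1), k ν * P (m - ν) * (t (m - ν) - σ) with hvdef
  have hvQ : ∀ m, (∑ n ∈ range (m + 1), q (m - n) * s n) / Q m = v m / Q m + σ := by
    intro m
    have hQ0 : Q m ≠ 0 := ne_of_gt (lt_of_lt_of_le hq0 (hQm m))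
    have hid : ∑ n ∈ range (m + 1), q (m - n) * s n = v m + σ * Q m := by
      rw [hqnum m, hvdef, hQdef]
      simp only
      rw [norlund_Q_eq hk m, Finset.mul_sum, ← Finset.sum_add_distrib]
      exact Finset.sum_congr rfl fun ν _ => by ring
    rw [hid]
    field_simp
  have hvb : ∀ m, |v m / Q m| ≤ (Ps / q 0) * ∑ ν ∈ range (m + 1), |k ν| * e (m - ν) := by
    intro m
    have hQpos : 0 < Q m := lt_of_lt_of_le hq0 (hQm m)
    have hv1 : |v m| ≤ Ps * ∑ ν ∈ range (m + 1), |k ν| * e (m - ν) := by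
      calc |v m| ≤ ∑ ν ∈ range (m + 1), |k ν * P (m - ν) * (t (m - ν) - σ)| :=
            Finset.abs_sum_le_sum_abs _ _
        _ ≤ ∑ ν ∈ range (m + 1), Ps * (|k ν| * e (m - ν)) := by
            refine Finset.sum_le_sum fun ν _ => ?_
            rw [abs_mul, abs_mul]
            rw [abs_of_pos (hPm (m - ν))]
            have : |k ν| * P (m - ν) * |t (m - ν) - σ| ≤ |k ν| * Ps * e (m - ν) := by
              refine mul_le_mul ?_ le_rfl (he0 _) (by positivity)
              exact mul_le_mul_of_nonneg_left (hPsum _) (abs_nonneg _)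
            calc |k ν| * P (m - ν) * |t (m - ν) - σ| ≤ |k ν| * Ps * e (m - ν) := this
              _ = Ps * (|k ν| * e (m - ν)) := by ring
        _ = Ps * ∑ ν ∈ range (m + 1), |k ν| * e (m - ν) := by rw [Finset.mul_sum]
    rw [abs_div, abs_of_pos hQpos]
    have h2 : |v m| / Q m ≤ |v m| / q 0 := by
      apply div_le_div_of_nonneg_left (abs_nonneg _) hq0 (hQm m)
    calc |v m| / Q m ≤ |v m| / q 0 := h2
      _ ≤ (Ps * ∑ ν ∈ range (m + 1), |k ν| * e (m - ν)) / q 0 := by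
          gcongr
      _ = (Ps / q 0) * ∑ ν ∈ range (m + 1), |k ν| * e (m - ν) := by ring
  have hconv : Tendsto (fun m => ∑ ν ∈ range (m + 1), |k ν| * e (m - ν)) atTop (nhds 0) :=
    conv_tendsto_zero hks (fun n => abs_nonneg _) he0 heM he
  have hvq0 : Tendsto (fun m => v m / Q m) atTop (nhds 0) := by
    have habs : Tendsto (fun m => |v m / Q m|) atTop (nhds 0) := by
      refine squeeze_zero (fun m => abs_nonneg _) hvb ?_
      have := hconv.const_mul (Ps / q 0)
      simpa using this
    exact (tendsto_zero_iff_abs_tendsto_zero _).mpr habs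
  unfold NorlundConv
  have : Tendsto (fun m => v m / Q m + σ) atTop (nhds (0 + σ)) :=
    hvq0.add tendsto_const_nhds
  rw [zero_add] at this
  refine this.congr fun m => (hvQ m).symm

lemma norlund_summable_of_incl (p q k : ℕ → ℝ)
    (hp0 : 0 < p 0) (hq0 : 0 < q 0)
    (hpn : ∀ n, 0 ≤ p n) (hqn : ∀ n, 0 ≤ q n)
    (hP : Summable p) (hQ : Summable q)
    (hk : ∀ n, q n = ∑ ν ∈ range (n + 1), k ν * p (n - ν))
    (himp : ∀ s σ, NorlundConv p s σ → NorlundConv q s σ) :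
    Summable fun n => |k n| := by
  set P : ℕ → ℝ := fun m => ∑ i ∈ range (m + 1), p i with hPdef
  set Q : ℕ → ℝ := fun m => ∑ i ∈ range (m + 1), q i with hQdef
  have hPm : ∀ m, 0 < P m := fun m => lt_of_lt_of_le hp0
    (Finset.single_le_sum (fun i _ => hpn i) (by simp))
  have hQm : ∀ m, 0 < Q m := fun m => lt_of_lt_of_le hq0
    (Finset.single_le_sum (fun i _ => hqn i) (by simp))
  have hp0' : ∀ m, p 0 ≤ P m := fun m =>
    Finset.single_le_sum (fun i _ => hpn i) (by simp)
  set Qs : ℝ := ∑' i, q i with hQs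
  have hQsum : ∀ m, Q m ≤ Qs := fun m => hQ.sum_le_tsum _ (fun i _ => hqn i)
  have hQs0 : 0 < Qs := lt_of_lt_of_le (hQm 0) (hQsum 0)
  -- Step A : key transfer
  have key : ∀ t : ℕ → ℝ, Tendsto t atTop (nhds 0) →
      Tendsto (fun m => (∑ ν ∈ range (m + 1), k ν * (P (m - ν) * t (m - ν))) / Q m)
        atTop (nhds 0) := by
    intro t ht
    have hNp : NorlundConv p (buildS p t) 0 := by
      unfold NorlundConv
      refine ht.congr fun m => ?_
      rw [buildS_spec (ne_of_gt hp0) t m]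
      rw [mul_comm, mul_div_assoc, div_self (ne_of_gt (hPm m)), mul_one]
    have hNq := himp _ _ hNp
    unfold NorlundConv at hNq
    refine hNq.congr fun m => ?_
    congr 1
    rw [norlund_conv_sum hk (buildS p t) m]
    exact Finset.sum_congr rfl fun ν _ => by rw [buildS_spec (ne_of_gt hp0) t (m - ν)]
  -- Step B : the functionals
  have hcoe : ∀ (t : C₀(ℕ, ℝ)) (x : ℕ), |t x| ≤ ‖t‖ := by
    intro t x
    have := t.toBCF.norm_coe_le_norm x
    simpa [Real.norm_eq_abs] using this
  let φlin : ℕ → C₀(ℕ, ℝ) →ₗ[ℝ] ℝ := fun m =>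
    { toFun := fun t => ∑ ν ∈ range (m + 1), (k ν * P (m - ν) / Q m) * t (m - ν)
      map_add' := by
        intro t u
        simp only [ZeroAtInftyContinuousMap.coe_add, Pi.add_apply, mul_add]
        rw [Finset.sum_add_distrib]
      map_smul' := by
        intro c t
        simp only [ZeroAtInftyContinuousMap.coe_smul, Pi.smul_apply, smul_eq_mul,
          RingHom.id_apply, Finset.mul_sum]
        exact Finset.sum_congr rfl fun ν _ => by ring }
  have hφbound : ∀ m (t : C₀(ℕ, ℝ)), ‖φlin m t‖ ≤
      (∑ ν ∈ range (m + 1), |k ν * P (m - ν) / Q m|) * ‖t‖ := by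
    intro m t
    rw [Real.norm_eq_abs]
    calc |∑ ν ∈ range (m + 1), (k ν * P (m - ν) / Q m) * t (m - ν)|
        ≤ ∑ ν ∈ range (m + 1), |(k ν * P (m - ν) / Q m) * t (m - ν)| :=
          Finset.abs_sum_le_sum_abs _ _
      _ ≤ ∑ ν ∈ range (m + 1), |k ν * P (m - ν) / Q m| * ‖t‖ := by
          refine Finset.sum_le_sum fun ν _ => ?_
          rw [abs_mul]
          exact mul_le_mul_of_nonneg_left (hcoe t _) (abs_nonneg _)
      _ = (∑ ν ∈ range (m + 1), |k ν * P (m - ν) / Q m|) * ‖t‖ := by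
          rw [Finset.sum_mul]
  let φ : ℕ → C₀(ℕ, ℝ) →L[ℝ] ℝ := fun m =>
    LinearMap.mkContinuous (φlin m) _ (hφbound m)
  -- Step C : pointwise boundedness
  have hpt : ∀ t : C₀(ℕ, ℝ), ∃ C, ∀ m, ‖φ m t‖ ≤ C := by
    intro t
    have ht0 : Tendsto (fun n => t n) atTop (nhds 0) := by
      have := zero_at_infty t
      rwa [cocompact_eq_atTop] at this
    have hu := key (fun n => t n) ht0
    have heq : ∀ m, φ m t
        = (∑ ν ∈ range (m + 1), k ν * (P (m - ν) * t (m - ν))) / Q m := by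
      intro m
      show ∑ ν ∈ range (m + 1), (k ν * P (m - ν) / Q m) * t (m - ν) = _
      rw [Finset.sum_div]
      exact Finset.sum_congr rfl fun ν _ => by ring
    have hu' : Tendsto (fun m => φ m t) atTop (nhds 0) := by
      refine hu.congr fun m => (heq m).symm
    obtain ⟨C, hC⟩ := bounded_of_tendsto hu'
    exact ⟨C, fun m => by rw [Real.norm_eq_abs]; exact hC m⟩
  obtain ⟨C', hC'⟩ := banach_steinhaus hpt
  -- Step E : lower bound via sign functions
  have hbdd : ∀ m, ∑ ν ∈ range (m + 1), |k ν| ≤ C' * Qs / p 0 := by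
    intro m
    set f : ℕ → ℝ := fun j => if j ≤ m then (if 0 ≤ k (m - j) then (1:ℝ) else -1) else 0
      with hfdef
    have hf0 : ∀ j, m < j → f j = 0 := fun j hj => by
      simp only [hfdef, if_neg (Nat.not_le.mpr hj)]
    let tt : C₀(ℕ, ℝ) := ⟨⟨f, continuous_of_discreteTopology⟩, by
      rw [cocompact_eq_atTop]
      refine Tendsto.congr' ?_ (tendsto_const_nhds (x := (0:ℝ)))
      filter_upwards [eventually_gt_atTop m] with j hj
      exact (hf0 j hj).symm⟩
    have htt1 : ‖tt‖ ≤ 1 := by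
      rw [← norm_toBCF_eq_norm]
      refine (BoundedContinuousFunction.norm_le zero_le_one).mpr fun x => ?_
      show ‖f x‖ ≤ 1
      rw [Real.norm_eq_abs, hfdef]
      by_cases h1 : x ≤ m
      · by_cases h2 : 0 ≤ k (m - x) <;> simp [h1, h2]
      · simp [h1]
    have hval : φ m tt = ∑ ν ∈ range (m + 1), |k ν| * P (m - ν) / Q m := by
      show ∑ ν ∈ range (m + 1), (k ν * P (m - ν) / Q m) * tt (m - ν) = _
      refine Finset.sum_congr rfl fun ν hν => ?_
      have hνm : ν ≤ m := by
        have := Finset.mem_range.mp hν; omega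
      have hsub : m - (m - ν) = ν := by omega
      have httv : tt (m - ν) = if 0 ≤ k ν then (1:ℝ) else -1 := by
        show f (m - ν) = _
        rw [hfdef]
        simp only [Nat.sub_le, if_true, hsub]
      rw [httv]
      by_cases h2 : 0 ≤ k ν
      · rw [if_pos h2, abs_of_nonneg h2]; ring
      · rw [if_neg h2, abs_of_neg (lt_of_not_ge h2)]; ring
    have hlow : (p 0 / Qs) * ∑ ν ∈ range (m + 1), |k ν| ≤ φ m tt := by
      rw [hval]
      have : ∀ ν ∈ range (m + 1), |k ν| * p 0 / Qs ≤ |k ν| * P (m - ν) / Q m := by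
        intro ν _
        exact div_le_div₀ (mul_nonneg (abs_nonneg _) (hPm _).le)
          (mul_le_mul_of_nonneg_left (hp0' _) (abs_nonneg _)) (hQm m) (hQsum m)
      calc (p 0 / Qs) * ∑ ν ∈ range (m + 1), |k ν|
          = ∑ ν ∈ range (m + 1), |k ν| * p 0 / Qs := by
            rw [Finset.mul_sum]
            exact Finset.sum_congr rfl fun ν _ => by ring
        _ ≤ ∑ ν ∈ range (m + 1), |k ν| * P (m - ν) / Q m := Finset.sum_le_sum this
    have hup : φ m tt ≤ C' := by
      calc φ m tt ≤ |φ m tt| := le_abs_self _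
        _ = ‖φ m tt‖ := (Real.norm_eq_abs _).symm
        _ ≤ ‖φ m‖ * ‖tt‖ := (φ m).le_opNorm tt
        _ ≤ C' * 1 := by
            refine mul_le_mul (hC' m) htt1 (norm_nonneg _) ?_
            exact le_trans (norm_nonneg _) (hC' m)
        _ = C' := mul_one C'
    have hcomb : (p 0 / Qs) * ∑ ν ∈ range (m + 1), |k ν| ≤ C' := le_trans hlow hup
    have h3 : p 0 * ∑ ν ∈ range (m + 1), |k ν| ≤ C' * Qs := by
      rw [div_mul_eq_mul_div, div_le_iff₀ hQs0] at hcomb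
      exact hcomb
    rw [le_div_iff₀ hp0]
    linarith [h3, mul_comm (p 0) (∑ ν ∈ range (m + 1), |k ν|)]
  -- Step F : summability
  refine summable_of_sum_range_le (c := C' * Qs / p 0) (fun n => abs_nonneg _) fun n => ?_
  calc ∑ i ∈ range n, |k i| ≤ ∑ i ∈ range (n + 1), |k i| := by
        rw [Finset.sum_range_succ]
        linarith [abs_nonneg (k n)]
    _ ≤ C' * Qs / p 0 := hbdd n

theorem norlund_equivalence_iff (p q k l : ℕ → ℝ)
    (hp0 : 0 < p 0) (hq0 : 0 < q 0)
    (hpn : ∀ n, 0 ≤ p n) (hqn : ∀ n, 0 ≤ q n)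
    (hP : Summable p) (hQ : Summable q)
    (hk : ∀ n, q n = ∑ ν ∈ Finset.range (n + 1), k ν * p (n - ν))
    (hl : ∀ n, p n = ∑ ν ∈ Finset.range (n + 1), l ν * q (n - ν)) :
    ((∀ (s : ℕ → ℝ) (σ : ℝ), NorlundConv p s σ ↔ NorlundConv q s σ)) ↔
      ((Summable fun n => |k n|) ∧ (Summable fun n => |l n|)) := by
  constructor
  · intro h
    exact ⟨norlund_summable_of_incl p q k hp0 hq0 hpn hqn hP hQ hk
        (fun s σ => (h s σ).mp),
      norlund_summable_of_incl q p l hq0 hp0 hqn hpn hQ hP hl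
        (fun s σ => (h s σ).mpr)⟩
  · rintro ⟨h1, h2⟩ s σ
    exact ⟨norlund_incl_of_summable p q k hp0 hq0 hpn hqn hP hk h1 s σ,
      norlund_incl_of_summable q p l hq0 hp0 hqn hpn hQ hl h2 s σ⟩
end

section
/- Let p_0 = 1, p_n > 0 for n > 0, suppose ∑ p_n x^n converges for |x| < 1, and suppose p_{n+1} p_{n−1} ≥ p_n^2 for all n ≥ 1 (log-convexity). Let (k_n) be the coefficients of the reciprocal power series 1/p(x) = ∑ k_n x^n. Then k_0 = 1, k_n ≤ 0 for all n > 0, and ∑_{n>0} k_n ≥ −1. (Kaluza–Szegő theorem.) -/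
open Filter Finset

open Topology

/-- Kaluza–Szegő theorem. -/
theorem kaluza_szego (p k : ℕ → ℝ)
    (hp0 : p 0 = 1) (hpn : ∀ n > 0, 0 < p n)
    (hconv : ∀ x : ℝ, |x| < 1 → Summable fun n => p n * x ^ n)
    (hlog : ∀ n ≥ 1, p n ^ 2 ≤ p (n + 1) * p (n - 1))
    (hk : ∀ n, (∑ ν ∈ Finset.range (n + 1), k ν * p (n - ν)) =
      if n = 0 then 1 else 0) :
    k 0 = 1 ∧ (∀ n > 0, k n ≤ 0) ∧ ∀ N, -1 ≤ ∑ n ∈ Finset.Icc 1 N, k n := by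
  have hppos : ∀ n, 0 < p n := by
    intro n
    rcases Nat.eq_zero_or_pos n with h | h
    · simp [h, hp0]
    · exact hpn n h
  have hk0 : k 0 = 1 := by
    have h := hk 0
    simp [hp0] at h
    exact h
  -- ratio lemma: log-convexity implies p(a+1) p b ≤ p(b+1) p a for a ≤ b
  have hratio : ∀ b a, a ≤ b → p (a + 1) * p b ≤ p (b + 1) * p a := by
    intro b
    induction b with
    | zero => intro a ha; interval_cases a; exact le_refl _
    | succ b ih =>
      intro a ha
      rcases Nat.eq_or_lt_of_le ha with h | h
      · rw [h]
      · have hab : a ≤ b := by omega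
        have h1 := ih a hab
        have h2 := hlog (b + 1) (by omega)
        simp only [Nat.add_sub_cancel] at h2
        have hb := hppos b
        nlinarith [mul_le_mul_of_nonneg_right h1 (hppos (b + 1)).le,
          mul_le_mul_of_nonneg_right h2 (hppos a).le, hppos a, hppos (a + 1),
          hppos (b + 1), hppos (b + 2)]
  -- k n ≤ 0 for n ≥ 1
  have hkneg : ∀ n, 1 ≤ n → k n ≤ 0 := by
    intro n
    induction n using Nat.strong_induction_on with
    | _ n ih =>
      intro hn
      rcases Nat.lt_or_ge n 2 with h2 | h2
      · have hn1 : n = 1 := by omega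
        subst hn1
        have h := hk 1
        simp [Finset.sum_range_succ, hp0, hk0] at h
        nlinarith [hppos 1]
      · -- n ≥ 2
        have e1 : k n = -∑ ν ∈ range n, k ν * p (n - ν) := by
          have h := hk n
          rw [Finset.sum_range_succ, if_neg (by omega : n ≠ 0)] at h
          simp only [Nat.sub_self, hp0, mul_one] at h
          linarith
        have e2 : (∑ ν ∈ range n, k ν * p (n - 1 - ν)) = 0 := by
          have h := hk (n - 1)
          rw [if_neg (by omega : n - 1 ≠ 0)] at h
          rwa [show n - 1 + 1 = n by omega] at h
        have key : k n * p (n - 1) =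
            -∑ ν ∈ range n, k ν * (p (n - ν) * p (n - 1) - p n * p (n - 1 - ν)) := by
          have expand : (∑ ν ∈ range n, k ν * (p (n - ν) * p (n - 1) - p n * p (n - 1 - ν)))
              = (∑ ν ∈ range n, k ν * p (n - ν)) * p (n - 1)
                - p n * ∑ ν ∈ range n, k ν * p (n - 1 - ν) := by
            rw [Finset.sum_mul, Finset.mul_sum, ← Finset.sum_sub_distrib]
            exact Finset.sum_congr rfl fun ν _ => by ring
          rw [expand, e2]
          rw [e1]
          ring
        have hsum_nonneg : 0 ≤ ∑ ν ∈ range n, k ν * (p (n - ν) * p (n - 1) - p n * p (n - 1 - ν)) := by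
          apply Finset.sum_nonneg
          intro ν hν
          rw [Finset.mem_range] at hν
          rcases Nat.eq_zero_or_pos ν with h0 | h0
          · subst h0
            simp only [Nat.sub_zero]
            have : p n * p (n - 1) - p n * p (n - 1) = 0 := by ring
            simp [this]
          · have hkν : k ν ≤ 0 := ih ν hν h0
            have hr := hratio (n - 1) (n - 1 - ν) (by omega)
            rw [show n - 1 - ν + 1 = n - ν by omega, show n - 1 + 1 = n by omega] at hr
            nlinarith
        have : k n * p (n - 1) ≤ 0 := by rw [key]; linarith
        nlinarith [hppos (n - 1)]
  refine ⟨hk0, fun n hn => hkneg n hn, ?_⟩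
  -- tail bound
  intro N
  set f : ℝ → ℝ := fun x => ∑ ν ∈ range (N + 1), k ν * x ^ ν with hf
  have hpos : ∀ x ∈ Set.Ioo (0 : ℝ) 1, 0 ≤ f x := by
    intro x hx
    obtain ⟨hx0, hx1⟩ := hx
    have hxabs : |x| < 1 := by rwa [abs_of_pos hx0]
    have hpsum := hconv x hxabs
    set P := ∑' n, p n * x ^ n with hP
    have hP1 : 1 ≤ P := by
      have := Summable.le_tsum hpsum 0 (fun i _ => mul_nonneg (hppos i).le (by positivity))
      simpa [hp0] using this
    -- the family
    set F : ℕ → ℕ → ℝ := fun ν n => if ν ≤ n then k ν * p (n - ν) * x ^ n else 0 with hF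
    have hinj : ∀ ν : ℕ, Function.Injective (fun m : ℕ => m + ν) := by
      intro ν a b hab
      simpa using hab
    have hzero : ∀ ν : ℕ, Function.support (F ν) ⊆ Set.range (fun m : ℕ => m + ν) := by
      intro ν n hn
      by_contra hc
      apply hn
      rw [hF]
      simp only
      rw [if_neg]
      intro hle
      exact hc ⟨n - ν, by simpa using by omega⟩
    have hcomp : ∀ ν : ℕ, (F ν) ∘ (fun m : ℕ => m + ν)
        = fun m => (k ν * x ^ ν) * (p m * x ^ m) := by
      intro ν
      funext m
      simp only [Function.comp, hF]
      rw [if_pos (by omega)]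
      rw [show m + ν - ν = m by omega, pow_add]
      ring
    have hFsummable : ∀ ν : ℕ, Summable (F ν) := by
      intro ν
      rw [← Function.Injective.summable_iff (hinj ν)
        (fun n hn => Function.notMem_support.mp fun hs => hn (hzero ν hs))]
      rw [hcomp ν]
      exact hpsum.mul_left _
    have hFtsum : ∀ ν : ℕ, (∑' n, F ν n) = k ν * x ^ ν * P := by
      intro ν
      rw [← Function.Injective.tsum_eq (hinj ν) (hzero ν)]
      rw [show (fun c : ℕ => F ν ((fun m : ℕ => m + ν) c))
          = fun m => (k ν * x ^ ν) * (p m * x ^ m) from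
        funext fun m => congrFun (hcomp ν) m]
      rw [tsum_mul_left]
    have hswap : f x * P = ∑' n, ∑ ν ∈ range (N + 1), F ν n := by
      rw [Summable.tsum_finsetSum (fun ν _ => hFsummable ν), hf]
      simp only
      rw [Finset.sum_mul]
      exact (Finset.sum_congr rfl fun ν _ => (hFtsum ν)).symm
    -- inner sum g
    have hfilter : ∀ n, (∑ ν ∈ range (N + 1), F ν n)
        = (∑ ν ∈ range (min n N + 1), k ν * p (n - ν)) * x ^ n := by
      intro n
      rw [Finset.sum_mul]
      rw [show (∑ ν ∈ range (N + 1), F ν n)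
          = ∑ ν ∈ (range (N + 1)).filter (fun ν => ν ≤ n), k ν * p (n - ν) * x ^ n from by
        rw [Finset.sum_filter]]
      apply Finset.sum_congr
      · ext ν
        simp only [Finset.mem_filter, Finset.mem_range]
        omega
      · intro ν _; rfl
    have hle : ∀ n, (if n = 0 then (1 : ℝ) else 0) ≤ ∑ ν ∈ range (N + 1), F ν n := by
      intro n
      rcases Nat.eq_zero_or_pos n with h0 | h0
      · subst h0
        rw [hfilter]
        simp only [Nat.zero_min, zero_add, if_pos rfl]
        rw [Finset.sum_range_one]
        simp [hk0, hp0]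
      · rw [if_neg (by omega), hfilter]
        rcases le_or_gt n N with hnN | hnN
        · rw [show min n N = n by omega]
          have := hk n
          rw [if_neg (by omega)] at this
          rw [this, zero_mul]
        · rw [show min n N = N by omega]
          apply mul_nonneg _ (by positivity)
          have hsplit : (∑ ν ∈ Finset.Ico 0 (N + 1), k ν * p (n - ν))
              + (∑ ν ∈ Finset.Ico (N + 1) (n + 1), k ν * p (n - ν))
              = ∑ ν ∈ Finset.Ico 0 (n + 1), k ν * p (n - ν) :=
            Finset.sum_Ico_consecutive _ (by omega) (by omega)
          have htot : (∑ ν ∈ Finset.Ico 0 (n + 1), k ν * p (n - ν)) = 0 := by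
            rw [← Finset.range_eq_Ico]
            have := hk n
            rwa [if_neg (by omega)] at this
          have htail : (∑ ν ∈ Finset.Ico (N + 1) (n + 1), k ν * p (n - ν)) ≤ 0 := by
            apply Finset.sum_nonpos
            intro ν hν
            rw [Finset.mem_Ico] at hν
            exact mul_nonpos_of_nonpos_of_nonneg (hkneg ν (by omega)) (hppos _).le
          rw [Finset.range_eq_Ico]
          linarith
    have hone : (1 : ℝ) ≤ f x * P := by
      rw [hswap]
      have hindsum : Summable (fun n : ℕ => if n = 0 then (1 : ℝ) else 0) := by
        apply summable_of_ne_finset_zero (s := {0})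
        intro n hn
        rw [if_neg (by simpa using hn)]
      calc (1 : ℝ) = ∑' n : ℕ, (if n = 0 then (1 : ℝ) else 0) := (tsum_ite_eq 0 1).symm
        _ ≤ ∑' n, ∑ ν ∈ range (N + 1), F ν n :=
          Summable.tsum_le_tsum hle hindsum (summable_sum (fun ν _ => hFsummable ν))
    nlinarith [hone, hP1]
  -- take the limit x → 1⁻
  have hcont : Continuous f := by
    apply continuous_finset_sum
    intro ν _
    exact continuous_const.mul (continuous_pow ν)
  haveI hne : (𝓝[Set.Ioo (0 : ℝ) 1] (1 : ℝ)).NeBot := right_nhdsWithin_Ioo_neBot (by norm_num)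
  have htend : Tendsto f (𝓝[Set.Ioo (0 : ℝ) 1] 1) (𝓝 (f 1)) :=
    (hcont.tendsto 1).mono_left nhdsWithin_le_nhds
  have hf1 : 0 ≤ f 1 :=
    ge_of_tendsto htend (eventually_mem_nhdsWithin.mono hpos)
  have hsum : f 1 = k 0 + ∑ n ∈ Finset.Icc 1 N, k n := by
    rw [hf]
    simp only [one_pow, mul_one]
    rw [Finset.range_eq_Ico, ← Finset.sum_Ico_consecutive _ (by omega : 0 ≤ 1) (by omega : 1 ≤ N + 1)]
    simp [Finset.Ico_add_one_right_eq_Icc]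
  rw [hsum, hk0] at hf1
  linarith
end

section
/- Let p_0 = 1, p_n > 0 for n > 0, with p_{n+1} p_{n−1} ≥ p_n^2 for all n ≥ 1, and suppose ∑ p_n = P < ∞. Then the Nörlund method (N,p) is trivial: (N,p)-convergence coincides with ordinary convergence. In particular, the convolution-inverse coefficients k_n of p satisfy ∑ |k_n| ≤ 2. -/
open Filter Finset

/-- Convolution of an absolutely summable kernel with a convergent sequence
converges to (sum of kernel) * (limit). -/
lemma conv_tendsto_aux {a : ℕ → ℝ} (ha : Summable fun n => |a n|)
    {t : ℕ → ℝ} {L : ℝ} (ht : Tendsto t atTop (nhds L)) :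
    Tendsto (fun m => ∑ ν ∈ Finset.range (m + 1), a ν * t (m - ν)) atTop
      (nhds ((∑' n, a n) * L)) := by
  have ha' : Summable a := ha.of_abs
  -- a uniform bound on |t j - L|
  obtain ⟨N₀, hN₀⟩ : ∃ N₀, ∀ j ≥ N₀, |t j - L| < 1 := by
    have := (Metric.tendsto_atTop.mp ht) 1 one_pos
    simpa [Real.dist_eq] using this
  set C : ℝ := 1 + ∑ j ∈ Finset.range N₀, |t j - L| with hCdef
  have hC : ∀ j, |t j - L| ≤ C := by
    intro j
    rcases lt_or_ge j N₀ with hj | hj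
    · have h1 : |t j - L| ≤ ∑ i ∈ Finset.range N₀, |t i - L| :=
        Finset.single_le_sum (f := fun i => |t i - L|) (fun i _ => abs_nonneg _)
          (Finset.mem_range.mpr hj)
      linarith
    · have h2 : (0:ℝ) ≤ ∑ i ∈ Finset.range N₀, |t i - L| :=
        Finset.sum_nonneg fun i _ => abs_nonneg _
      have := (hN₀ j hj).le
      linarith
  have hC0 : 0 ≤ C := le_trans (abs_nonneg _) (hC 0)
  set Aabs : ℝ := ∑' n, |a n| with hAdef
  have hAabs0 : 0 ≤ Aabs := tsum_nonneg fun n => abs_nonneg _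
  -- decompose
  have hdecomp : ∀ m, ∑ ν ∈ Finset.range (m + 1), a ν * t (m - ν) =
      (∑ ν ∈ Finset.range (m + 1), a ν * (t (m - ν) - L)) +
      (∑ ν ∈ Finset.range (m + 1), a ν) * L := by
    intro m
    rw [Finset.sum_mul, ← Finset.sum_add_distrib]
    apply Finset.sum_congr rfl
    intro ν _
    ring
  -- partial sums of a tend to the total sum
  have hpart : Tendsto (fun m => ∑ ν ∈ Finset.range (m + 1), a ν) atTop
      (nhds (∑' n, a n)) := by
    have := ha'.hasSum.tendsto_sum_nat
    exact this.comp (tendsto_add_atTop_nat 1)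
  have hpartabs : Tendsto (fun m => ∑ ν ∈ Finset.range m, |a ν|) atTop
      (nhds Aabs) := ha.hasSum.tendsto_sum_nat
  -- the error term tends to 0
  have herr : Tendsto (fun m => ∑ ν ∈ Finset.range (m + 1), a ν * (t (m - ν) - L))
      atTop (nhds 0) := by
    apply squeeze_zero_norm (a := fun m => ∑ ν ∈ Finset.range (m + 1), |a ν| * |t (m - ν) - L|)
    · intro m
      calc ‖∑ ν ∈ Finset.range (m + 1), a ν * (t (m - ν) - L)‖
          ≤ ∑ ν ∈ Finset.range (m + 1), ‖a ν * (t (m - ν) - L)‖ := norm_sum_le _ _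
        _ = ∑ ν ∈ Finset.range (m + 1), |a ν| * |t (m - ν) - L| := by
            simp [Real.norm_eq_abs, abs_mul]
    · rw [Metric.tendsto_atTop]
      intro ε hε
      have hden : (0:ℝ) < Aabs + C + 1 := by linarith
      set δ : ℝ := ε / (2 * (Aabs + C + 1)) with hδdef
      have hδ : 0 < δ := by positivity
      -- choose M with partial sums of |a| within δ of Aabs
      obtain ⟨M, hM⟩ : ∃ M, ∀ m ≥ M, |(∑ ν ∈ Finset.range m, |a ν|) - Aabs| < δ := by
        have := (Metric.tendsto_atTop.mp hpartabs) δ hδ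
        simpa [Real.dist_eq] using this
      -- choose N with |t j - L| < δ for j ≥ N
      obtain ⟨N, hN⟩ : ∃ N, ∀ j ≥ N, |t j - L| < δ := by
        have := (Metric.tendsto_atTop.mp ht) δ hδ
        simpa [Real.dist_eq] using this
      refine ⟨M + N, fun m hm => ?_⟩
      have hMm : M ≤ m + 1 := by omega
      have hsum_nonneg : (0:ℝ) ≤ ∑ ν ∈ Finset.range (m + 1), |a ν| * |t (m - ν) - L| :=
        Finset.sum_nonneg fun ν _ => mul_nonneg (abs_nonneg _) (abs_nonneg _)
      rw [Real.dist_eq, sub_zero, abs_of_nonneg hsum_nonneg]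
      -- split the sum
      have hsplit : ∑ ν ∈ Finset.range (m + 1), |a ν| * |t (m - ν) - L| =
          (∑ ν ∈ Finset.range M, |a ν| * |t (m - ν) - L|) +
          ∑ ν ∈ Finset.Ico M (m + 1), |a ν| * |t (m - ν) - L| := by
        rw [Finset.range_eq_Ico, Finset.range_eq_Ico]
        exact (Finset.sum_Ico_consecutive _ (Nat.zero_le M) hMm).symm
      rw [hsplit]
      -- bound the first part
      have h1 : (∑ ν ∈ Finset.range M, |a ν| * |t (m - ν) - L|) ≤ Aabs * δ := by
        calc (∑ ν ∈ Finset.range M, |a ν| * |t (m - ν) - L|)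
            ≤ ∑ ν ∈ Finset.range M, |a ν| * δ := by
              apply Finset.sum_le_sum
              intro ν hν
              have hν' : ν < M := Finset.mem_range.mp hν
              have : N ≤ m - ν := by omega
              exact mul_le_mul_of_nonneg_left (hN _ this).le (abs_nonneg _)
          _ = (∑ ν ∈ Finset.range M, |a ν|) * δ := by rw [Finset.sum_mul]
          _ ≤ Aabs * δ := by
              apply mul_le_mul_of_nonneg_right _ hδ.le
              exact Summable.sum_le_tsum _ (fun i _ => abs_nonneg _) ha
      -- bound the second part
      have h2 : (∑ ν ∈ Finset.Ico M (m + 1), |a ν| * |t (m - ν) - L|) ≤ δ * C := by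
        have htail : (∑ ν ∈ Finset.Ico M (m + 1), |a ν|) ≤ δ := by
          have e1 : (∑ ν ∈ Finset.range M, |a ν|) + ∑ ν ∈ Finset.Ico M (m + 1), |a ν| =
              ∑ ν ∈ Finset.range (m + 1), |a ν| := by
            rw [Finset.range_eq_Ico, Finset.range_eq_Ico]
            exact Finset.sum_Ico_consecutive _ (Nat.zero_le M) hMm
          have e2 : (∑ ν ∈ Finset.range (m + 1), |a ν|) ≤ Aabs :=
            Summable.sum_le_tsum _ (fun i _ => abs_nonneg _) ha
          have e3 : Aabs - δ < ∑ ν ∈ Finset.range M, |a ν| := by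
            have := hM M le_rfl
            have := abs_lt.mp this
            linarith [this.1]
          linarith
        calc (∑ ν ∈ Finset.Ico M (m + 1), |a ν| * |t (m - ν) - L|)
            ≤ ∑ ν ∈ Finset.Ico M (m + 1), |a ν| * C := by
              apply Finset.sum_le_sum
              intro ν _
              exact mul_le_mul_of_nonneg_left (hC _) (abs_nonneg _)
          _ = (∑ ν ∈ Finset.Ico M (m + 1), |a ν|) * C := by rw [Finset.sum_mul]
          _ ≤ δ * C := mul_le_mul_of_nonneg_right htail hC0
      calc (∑ ν ∈ Finset.range M, |a ν| * |t (m - ν) - L|) +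
            ∑ ν ∈ Finset.Ico M (m + 1), |a ν| * |t (m - ν) - L|
          ≤ Aabs * δ + δ * C := add_le_add h1 h2
        _ = δ * (Aabs + C) := by ring
        _ < ε := by
            rw [hδdef]
            rw [div_mul_eq_mul_div, div_lt_iff₀ (by linarith : (0:ℝ) < 2 * (Aabs + C + 1))]
            nlinarith
  have := herr.add (hpart.mul_const L)
  rw [zero_add] at this
  exact Tendsto.congr (fun m => (hdecomp m).symm) this

theorem logconvex_finite_norlund_trivial (p k : ℕ → ℝ)
    (hp0 : p 0 = 1) (hpn : ∀ n > 0, 0 < p n)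
    (hlog : ∀ n ≥ 1, p n ^ 2 ≤ p (n + 1) * p (n - 1))
    (hP : Summable p)
    (hk : ∀ n, (∑ ν ∈ Finset.range (n + 1), k ν * p (n - ν)) =
      if n = 0 then 1 else 0) :
    (Summable fun n => |k n|) ∧ (∑' n, |k n|) ≤ 2 ∧
    ∀ (s : ℕ → ℝ) (σ : ℝ), NorlundConv p s σ ↔ Tendsto s atTop (nhds σ) := by
  -- positivity of p everywhere
  have hppos : ∀ n, 0 < p n := by
    intro n
    cases n with
    | zero => rw [hp0]; exact one_pos
    | succ m => exact hpn _ (Nat.succ_pos m)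
  -- k 0 = 1
  have hk0 : k 0 = 1 := by
    have := hk 0
    simpa [hp0] using this
  -- the recurrence for n ≥ 1
  have hrec : ∀ n, n ≠ 0 → (∑ ν ∈ Finset.range (n + 1), k ν * p (n - ν)) = 0 := by
    intro n hn
    rw [hk n, if_neg hn]
  -- monotone ratios: p(m+1) p(n) ≤ p(n+1) p(m) for m ≤ n
  have hmono : ∀ m n, m ≤ n → p (m + 1) * p n ≤ p (n + 1) * p m := by
    intro m n hmn
    induction n, hmn using Nat.le_induction with
    | base => rw [mul_comm]
    | succ n hmn ih =>
      have hl := hlog (n + 1) (by omega)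
      simp only [Nat.add_sub_cancel] at hl
      have h1 := hppos n
      have h2 := hppos (n + 1)
      have h3 := hppos (n + 2)
      have h4 := hppos m
      have h5 := hppos (m + 1)
      nlinarith [mul_le_mul_of_nonneg_left ih h2.le]
  -- Kaluza: k n ≤ 0 for n ≥ 1
  have hkneg : ∀ n, 1 ≤ n → k n ≤ 0 := by
    intro n
    induction n using Nat.strong_induction_on with
    | _ n ih =>
      intro hn
      match n, hn with
      | 1, _ =>
        have := hrec 1 one_ne_zero
        rw [Finset.sum_range_succ, Finset.sum_range_one] at this
        simp only [Nat.sub_zero, Nat.sub_self, hp0, hk0, one_mul, mul_one] at this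
        have := hppos 1
        linarith
      | (m + 2), _ =>
        -- k(m+2) = -S where S = ∑_{ν≤m+1} k ν p(m+2-ν)
        set S : ℝ := ∑ ν ∈ Finset.range (m + 2), k ν * p (m + 2 - ν) with hSdef
        have hknS : k (m + 2) = -S := by
          have h := hrec (m + 2) (by omega)
          rw [Finset.sum_range_succ] at h
          simp only [Nat.sub_self, hp0, mul_one] at h
          linarith
        -- T = ∑_{ν≤m+1} k ν p(m+1-ν) = 0
        have hT : (∑ ν ∈ Finset.range (m + 2), k ν * p (m + 1 - ν)) = 0 :=
          hrec (m + 1) (by omega)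
        -- termwise comparison: T * p(m+2) ≤ S * p(m+1)
        have key : (∑ ν ∈ Finset.range (m + 2), k ν * p (m + 1 - ν)) * p (m + 2) ≤
            S * p (m + 1) := by
          rw [hSdef, Finset.sum_mul, Finset.sum_mul]
          apply Finset.sum_le_sum
          intro ν hν
          have hν' : ν < m + 2 := Finset.mem_range.mp hν
          rcases Nat.eq_zero_or_pos ν with h0 | h1
          · subst h0
            simp only [Nat.sub_zero, hk0, one_mul]
            rw [mul_comm (p (m + 2)) (p (m + 1))]
          · have hkν : k ν ≤ 0 := ih ν (by omega) h1
            have hle : ν ≤ m + 1 := by omega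
            have hsub : m + 2 - ν = (m + 1 - ν) + 1 := by omega
            have hm' : p ((m + 1 - ν) + 1) * p (m + 1) ≤ p (m + 2) * p (m + 1 - ν) :=
              hmono (m + 1 - ν) (m + 1) (by omega)
            rw [hsub]
            nlinarith
        rw [hT, zero_mul] at key
        have hp1 := hppos (m + 1)
        have hS0 : 0 ≤ S := by nlinarith
        linarith [hknS, hS0]
  -- |k n| ≤ p n for all n
  have hkabs : ∀ n, |k n| ≤ p n := by
    intro n
    cases n with
    | zero => rw [hk0, hp0]; simp
    | succ m =>
      have hrec' := hrec (m + 1) (by omega)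
      rw [Finset.sum_range_succ] at hrec'
      simp only [Nat.sub_self, hp0, mul_one] at hrec'
      have hsum_le : (∑ ν ∈ Finset.range (m + 1), k ν * p (m + 1 - ν)) ≤ p (m + 1) := by
        rw [Finset.sum_range_succ']
        simp only [Nat.sub_zero, hk0, one_mul]
        have : (∑ i ∈ Finset.range m, k (i + 1) * p (m + 1 - (i + 1))) ≤ 0 := by
          apply Finset.sum_nonpos
          intro i _
          exact mul_nonpos_of_nonpos_of_nonneg (hkneg (i + 1) (by omega)) (hppos _).le
        linarith
      have hkn : k (m + 1) ≤ 0 := hkneg (m + 1) (by omega)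
      rw [abs_of_nonpos hkn]
      linarith
  -- summability of |k|
  have hsk : Summable fun n => |k n| :=
    Summable.of_nonneg_of_le (fun n => abs_nonneg _) hkabs hP
  have hksum : Summable k := hsk.of_abs
  -- norm summability
  have hskn : Summable fun n => ‖k n‖ := by simpa [Real.norm_eq_abs] using hsk
  have hspn : Summable fun n => ‖p n‖ := by
    apply Summable.congr hP
    intro n
    rw [Real.norm_eq_abs, abs_of_nonneg (hppos n).le]
  -- Cauchy product: (∑ k)(∑ p) = 1
  have hcp : (∑' n, k n) * (∑' n, p n) = 1 := by
    rw [tsum_mul_tsum_eq_tsum_sum_range_of_summable_norm hskn hspn]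
    calc (∑' n, ∑ ν ∈ Finset.range (n + 1), k ν * p (n - ν))
        = ∑' n, (if n = 0 then (1:ℝ) else 0) := tsum_congr hk
      _ = 1 := tsum_ite_eq 0 1
  set P : ℝ := ∑' n, p n with hPdef
  have hP1 : 1 ≤ P := by
    have := Summable.le_tsum hP 0 (fun j _ => (hppos j).le)
    rwa [hp0] at this
  have hPpos : 0 < P := by linarith
  have hKsum_pos : 0 < ∑' n, k n := by nlinarith
  -- tsum |k| ≤ 2
  have htsum_le : (∑' n, |k n|) ≤ 2 := by
    have h1 : (∑' n, |k n|) = |k 0| + ∑' n, |k (n + 1)| := Summable.tsum_eq_zero_add hsk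
    have h2 : (∑' n, |k (n + 1)|) = ∑' n, -k (n + 1) := by
      apply tsum_congr
      intro n
      rw [abs_of_nonpos (hkneg (n + 1) (by omega))]
    have h3 : (∑' n, k n) = k 0 + ∑' n, k (n + 1) := Summable.tsum_eq_zero_add hksum
    rw [h1, h2, tsum_neg, hk0, abs_one]
    have : (∑' n, k (n + 1)) = (∑' n, k n) - 1 := by rw [h3, hk0]; ring
    rw [this]
    linarith
  refine ⟨hsk, htsum_le, ?_⟩
  -- the Nörlund equivalence
  intro s σ
  -- partial sums of p
  have hPm_pos : ∀ m, (0:ℝ) < ∑ j ∈ Finset.range (m + 1), p j := by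
    intro m
    exact Finset.sum_pos (fun i _ => hppos i)
      (Finset.nonempty_range_iff.mpr (Nat.succ_ne_zero m))
  have hPm_lim : Tendsto (fun m => ∑ j ∈ Finset.range (m + 1), p j) atTop (nhds P) :=
    hP.hasSum.tendsto_sum_nat.comp (tendsto_add_atTop_nat 1)
  -- reflection identity
  have hreflect : ∀ (u v : ℕ → ℝ) (m : ℕ),
      (∑ j ∈ Finset.range (m + 1), u j * v (m - j)) =
      ∑ j ∈ Finset.range (m + 1), u (m - j) * v j := by
    intro u v m
    rw [← Finset.sum_range_reflect (fun j => u (m - j) * v j) (m + 1)]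
    apply Finset.sum_congr rfl
    intro j hj
    have hj' : j ≤ m := Nat.lt_succ_iff.mp (Finset.mem_range.mp hj)
    have e1 : m + 1 - 1 - j = m - j := by omega
    have e2 : m - (m - j) = j := Nat.sub_sub_self hj'
    rw [e1, e2]
  constructor
  · -- Nörlund convergence → ordinary convergence
    intro h
    set T : ℕ → ℝ := fun m => ∑ n ∈ Finset.range (m + 1), p (m - n) * s n with hTdef
    have hT_lim : Tendsto T atTop (nhds (σ * P)) := by
      have := (h.mul hPm_lim)
      apply Tendsto.congr _ this
      intro m
      field_simp [(hPm_pos m).ne']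
      rfl
    -- the inversion identity s n = ∑ k ν T(n-ν), via power series
    have hinv : ∀ n, s n = ∑ ν ∈ Finset.range (n + 1), k ν * T (n - ν) := by
      intro n
      set Kq : PowerSeries ℝ := PowerSeries.mk k with hKq
      set Pq : PowerSeries ℝ := PowerSeries.mk p with hPq
      set Sq : PowerSeries ℝ := PowerSeries.mk s with hSq
      have hKP : Kq * Pq = 1 := by
        ext j
        rw [PowerSeries.coeff_mul, Finset.Nat.sum_antidiagonal_eq_sum_range_succ_mk]
        simp only [hKq, hPq, PowerSeries.coeff_mk]
        rw [hk j, PowerSeries.coeff_one]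
      have hcoeffPS : ∀ m, (PowerSeries.coeff m) (Pq * Sq) = T m := by
        intro m
        rw [PowerSeries.coeff_mul, Finset.Nat.sum_antidiagonal_eq_sum_range_succ_mk]
        simp only [hPq, hSq, PowerSeries.coeff_mk]
        rw [hreflect p s m]
      have hS : Sq = Kq * (Pq * Sq) := by rw [← mul_assoc, hKP, one_mul]
      calc s n = (PowerSeries.coeff n) Sq := by rw [hSq, PowerSeries.coeff_mk]
        _ = (PowerSeries.coeff n) (Kq * (Pq * Sq)) := by rw [← hS]
        _ = ∑ ν ∈ Finset.range (n + 1), k ν * T (n - ν) := by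
            rw [PowerSeries.coeff_mul, Finset.Nat.sum_antidiagonal_eq_sum_range_succ_mk]
            apply Finset.sum_congr rfl
            intro ν _
            rw [hKq, PowerSeries.coeff_mk, hcoeffPS]
    have hfinal := conv_tendsto_aux hsk hT_lim
    have hlim_eq : (∑' n, k n) * (σ * P) = σ := by
      calc (∑' n, k n) * (σ * P) = ((∑' n, k n) * P) * σ := by ring
        _ = σ := by rw [hcp, one_mul]
    rw [hlim_eq] at hfinal
    exact Tendsto.congr (fun n => (hinv n).symm) hfinal
  · -- ordinary convergence → Nörlund convergence
    intro hs
    have hspabs : Summable fun n => |p n| := by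
      apply Summable.congr hP
      intro n
      rw [abs_of_nonneg (hppos n).le]
    have hnum : Tendsto (fun m => ∑ n ∈ Finset.range (m + 1), p (m - n) * s n)
        atTop (nhds (P * σ)) := by
      have := conv_tendsto_aux hspabs hs
      apply Tendsto.congr _ this
      intro m
      rw [hreflect p s m]
    unfold NorlundConv
    have := hnum.div hPm_lim hPpos.ne'
    have heq : P * σ / P = σ := by field_simp
    rwa [heq] at this
end

section
/- For s > 1, the Nörlund method with weights p_n = (n+1)^{−s} is trivial: a sequence converges in the ordinary sense if and only if its Nörlund means with these weights converge, to the same limit. -/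
open Filter Finset PowerSeries


/-- Convolution with a summable kernel of a null sequence is null. -/
lemma norlund_conv_tendsto_zero {c b : ℕ → ℝ} (hc : Summable fun n => |c n|)
    (hb : Tendsto b atTop (nhds 0)) :
    Tendsto (fun m => ∑ k ∈ Finset.range (m + 1), c k * b (m - k)) atTop (nhds 0) := by
  obtain ⟨M, hM⟩ : ∃ M : ℝ, ∀ n, |b n| ≤ M := by
    obtain ⟨M, hM⟩ := (hb.abs.bddAbove_range)
    exact ⟨M, fun n => hM ⟨n, rfl⟩⟩
  have hM0 : 0 ≤ M := le_trans (abs_nonneg _) (hM 0)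
  set T : ℝ := ∑' n, |c n| with hT
  have hT0 : 0 ≤ T := tsum_nonneg fun n => abs_nonneg _
  have hpartial : ∀ N : ℕ, ∑ k ∈ Finset.range N, |c k| ≤ T :=
    fun N => Summable.sum_le_tsum _ (fun i _ => abs_nonneg _) hc
  rw [NormedAddCommGroup.tendsto_nhds_zero]
  intro ε hε
  set A : ℝ := ε / (2 * (T + 1)) with hA
  set B : ℝ := ε / (2 * (M + 1)) with hB
  have hApos : 0 < A := by positivity
  have hBpos : 0 < B := by positivity
  -- tail of c small
  obtain ⟨K, hK⟩ : ∃ K : ℕ, T - ∑ k ∈ Finset.range K, |c k| < B := by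
    have := hc.hasSum.tendsto_sum_nat
    rw [Metric.tendsto_atTop] at this
    obtain ⟨K, hK⟩ := this B hBpos
    refine ⟨K, ?_⟩
    have := hK K le_rfl
    rw [Real.dist_eq, abs_sub_comm] at this
    exact lt_of_le_of_lt (le_abs_self _) this
  -- b eventually small
  obtain ⟨N, hN⟩ : ∃ N : ℕ, ∀ n ≥ N, |b n| ≤ A := by
    rw [Metric.tendsto_atTop] at hb
    obtain ⟨N, hN⟩ := hb A hApos
    exact ⟨N, fun n hn => by simpa [Real.dist_eq] using (hN n hn).le⟩
  filter_upwards [eventually_ge_atTop (K + N)] with m hm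
  have hKm : K ≤ m + 1 := by omega
  have hsplit : ∑ k ∈ Finset.range (m + 1), c k * b (m - k)
      = ∑ k ∈ Finset.range K, c k * b (m - k) + ∑ k ∈ Finset.Ico K (m + 1), c k * b (m - k) := by
    simp only [Finset.range_eq_Ico]
    rw [← Finset.sum_Ico_consecutive _ (Nat.zero_le K) hKm]
  have habs : ∀ (S : Finset ℕ), |∑ k ∈ S, c k * b (m - k)| ≤ ∑ k ∈ S, |c k| * |b (m - k)| := by
    intro S
    calc |∑ k ∈ S, c k * b (m - k)| ≤ ∑ k ∈ S, |c k * b (m - k)| := Finset.abs_sum_le_sum_abs _ _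
      _ = ∑ k ∈ S, |c k| * |b (m - k)| := by simp [abs_mul]
  have h1 : |∑ k ∈ Finset.range K, c k * b (m - k)| ≤ T * A := by
    refine le_trans (habs _) ?_
    calc ∑ k ∈ Finset.range K, |c k| * |b (m - k)|
        ≤ ∑ k ∈ Finset.range K, |c k| * A := by
          refine Finset.sum_le_sum fun k hk => ?_
          have hk' : k < K := Finset.mem_range.mp hk
          exact mul_le_mul_of_nonneg_left (hN _ (by omega)) (abs_nonneg _)
      _ = (∑ k ∈ Finset.range K, |c k|) * A := by rw [Finset.sum_mul]
      _ ≤ T * A := mul_le_mul_of_nonneg_right (hpartial K) hApos.le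
  have h2 : |∑ k ∈ Finset.Ico K (m + 1), c k * b (m - k)| ≤ B * M := by
    refine le_trans (habs _) ?_
    calc ∑ k ∈ Finset.Ico K (m + 1), |c k| * |b (m - k)|
        ≤ ∑ k ∈ Finset.Ico K (m + 1), |c k| * M := by
          refine Finset.sum_le_sum fun k hk => mul_le_mul_of_nonneg_left (hM _) (abs_nonneg _)
      _ = (∑ k ∈ Finset.Ico K (m + 1), |c k|) * M := by rw [Finset.sum_mul]
      _ ≤ B * M := by
          refine mul_le_mul_of_nonneg_right ?_ hM0
          have : ∑ k ∈ Finset.Ico K (m + 1), |c k|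
              = ∑ k ∈ Finset.range (m + 1), |c k| - ∑ k ∈ Finset.range K, |c k| := by
            simp only [Finset.range_eq_Ico]
            rw [← Finset.sum_Ico_consecutive _ (Nat.zero_le K) hKm]; ring
          rw [this]
          have := hpartial (m + 1)
          linarith [hK]
  calc ‖∑ k ∈ Finset.range (m + 1), c k * b (m - k)‖
      = |∑ k ∈ Finset.range K, c k * b (m - k) + ∑ k ∈ Finset.Ico K (m + 1), c k * b (m - k)| := by
        rw [Real.norm_eq_abs, hsplit]
    _ ≤ T * A + B * M := le_trans (abs_add_le _ _) (add_le_add h1 h2)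
    _ < (T + 1) * A + B * (M + 1) := by nlinarith
    _ = ε := by rw [hA, hB]; field_simp; ring

lemma norlund_conv_tendsto {c t : ℕ → ℝ} (hc : Summable c) {L : ℝ}
    (ht : Tendsto t atTop (nhds L)) :
    Tendsto (fun m => ∑ k ∈ Finset.range (m + 1), c k * t (m - k)) atTop
      (nhds ((∑' n, c n) * L)) := by
  have hb : Tendsto (fun n => t n - L) atTop (nhds 0) := by
    simpa using ht.sub (tendsto_const_nhds (x := L))
  have h0 := norlund_conv_tendsto_zero hc.abs hb
  have h1 : Tendsto (fun m => (∑ k ∈ Finset.range (m + 1), c k) * L) atTop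
      (nhds ((∑' n, c n) * L)) :=
    (hc.hasSum.tendsto_sum_nat.comp (tendsto_add_atTop_nat 1)).mul_const L
  have := h0.add h1
  rw [zero_add] at this
  convert this using 2 with m
  rw [Finset.sum_mul, ← Finset.sum_add_distrib]
  exact Finset.sum_congr rfl fun k hk => by ring


noncomputable def znp (s : ℝ) (n : ℕ) : ℝ := ((n : ℝ) + 1) ^ (-s)

lemma znp_pos (s : ℝ) (n : ℕ) : 0 < znp s n :=
  Real.rpow_pos_of_pos (by positivity) _

lemma znp_zero (s : ℝ) : znp s 0 = 1 := by
  simp [znp]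

lemma znp_summable {s : ℝ} (hs : 1 < s) : Summable (znp s) := by
  have h0 : Summable fun n : ℕ => (n : ℝ) ^ (-s) :=
    Real.summable_nat_rpow.mpr (by linarith)
  have h1 := (summable_nat_add_iff 1).mpr h0
  refine h1.congr fun n => ?_
  simp [znp]

lemma znp_logconvex {s : ℝ} (hs : 1 < s) {i j : ℕ} (h : i ≤ j) :
    znp s (i + 1) * znp s j ≤ znp s i * znp s (j + 1) := by
  unfold znp
  push_cast
  rw [← Real.mul_rpow (by positivity) (by positivity),
    ← Real.mul_rpow (by positivity) (by positivity)]
  refine Real.rpow_le_rpow_of_nonpos (by positivity) ?_ (by linarith)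
  have : (i : ℝ) ≤ (j : ℝ) := Nat.cast_le.mpr h
  nlinarith

noncomputable def znq (s : ℝ) (n : ℕ) : ℝ :=
  PowerSeries.coeff n (PowerSeries.mk (znp s))⁻¹

lemma znp_constantCoeff (s : ℝ) :
    PowerSeries.constantCoeff (PowerSeries.mk (znp s)) ≠ 0 := by
  rw [PowerSeries.constantCoeff_mk, znp_zero]; norm_num

lemma coeff_mul_mk (f g : ℕ → ℝ) (m : ℕ) :
    PowerSeries.coeff m (PowerSeries.mk f * PowerSeries.mk g)
      = ∑ k ∈ Finset.range (m + 1), f k * g (m - k) := by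
  rw [PowerSeries.coeff_mul, Finset.Nat.sum_antidiagonal_eq_sum_range_succ_mk]
  simp [PowerSeries.coeff_mk]

lemma znq_zero (s : ℝ) : znq s 0 = 1 := by
  rw [znq, PowerSeries.coeff_zero_eq_constantCoeff, PowerSeries.constantCoeff_inv,
    PowerSeries.constantCoeff_mk, znp_zero, inv_one]

lemma znq_orth (s : ℝ) (n : ℕ) :
    ∑ k ∈ Finset.range (n + 1), znq s k * znp s (n - k) = if n = 0 then 1 else 0 := by
  have h := PowerSeries.inv_mul_cancel (PowerSeries.mk (znp s)) (znp_constantCoeff s)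
  have h2 := congrArg (PowerSeries.coeff n) h
  rw [PowerSeries.coeff_mul, Finset.Nat.sum_antidiagonal_eq_sum_range_succ_mk,
    PowerSeries.coeff_one] at h2
  rw [← h2]
  exact Finset.sum_congr rfl fun k hk => by rw [znq, PowerSeries.coeff_mk]

lemma znq_rec (s : ℝ) {n : ℕ} (hn : n ≠ 0) :
    ∑ k ∈ Finset.Ico 1 (n + 1), (-znq s k) * znp s (n - k) = znp s n := by
  have h := znq_orth s n
  rw [if_neg hn] at h
  rw [Finset.range_eq_Ico, Finset.sum_eq_sum_Ico_succ_bot (by omega : 0 < n + 1)] at h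
  simp only [znq_zero, one_mul, Nat.sub_zero] at h
  have : ∑ k ∈ Finset.Ico 1 (n + 1), (-znq s k) * znp s (n - k)
      = -(∑ k ∈ Finset.Ico 1 (n + 1), znq s k * znp s (n - k)) := by
    rw [← Finset.sum_neg_distrib]
    exact Finset.sum_congr rfl fun k _ => by ring
  rw [this]
  linarith

lemma znq_nonpos {s : ℝ} (hs : 1 < s) : ∀ n : ℕ, n ≠ 0 → znq s n ≤ 0 := by
  intro n
  induction n using Nat.strong_induction_on with
  | _ n IH =>
    intro hn
    match n, hn with
    | 1, _ =>
      have h := znq_orth s 1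
      rw [if_neg one_ne_zero] at h
      rw [Finset.sum_range_succ, Finset.sum_range_one] at h
      simp only [znq_zero, one_mul, Nat.sub_zero, Nat.sub_self, znp_zero, mul_one] at h
      linarith [znp_pos s 1]
    | (m + 2), _ =>
      have h2 := znq_rec s (n := m + 2) (by omega)
      have h1 := znq_rec s (n := m + 1) (by omega)
      rw [Finset.sum_Ico_succ_top (by omega : 1 ≤ m + 2)] at h2
      -- h2 : ∑ k ∈ Ico 1 (m+2), (-q k) * p (m+2-k) + (-q (m+2)) * p 0 = p (m+2)
      have hS : ∑ k ∈ Finset.Ico 1 (m + 2), (-znq s k) * znp s (m + 2 - k) ≤ znp s (m + 2) := by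
        have hterm : ∀ k ∈ Finset.Ico 1 (m + 2),
            (-znq s k) * znp s (m + 2 - k) * znp s (m + 1)
              ≤ (-znq s k) * znp s (m + 1 - k) * znp s (m + 2) := by
          intro k hk
          obtain ⟨hk1, hk2⟩ := Finset.mem_Ico.mp hk
          have hq : 0 ≤ -znq s k := neg_nonneg.mpr (IH k (by omega) (by omega))
          have hlc := znp_logconvex hs (i := m + 1 - k) (j := m + 1) (by omega)
          have he : m + 1 - k + 1 = m + 2 - k := by omega
          rw [he] at hlc
          rw [mul_assoc, mul_assoc]
          exact mul_le_mul_of_nonneg_left hlc hq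
        have hsum := Finset.sum_le_sum hterm
        rw [← Finset.sum_mul, ← Finset.sum_mul, h1] at hsum
        have hp1 := znp_pos s (m + 1)
        nlinarith [hsum, hp1]
      have he2 : (m + 2) - (m + 2) = 0 := by omega
      rw [he2, znp_zero, mul_one] at h2
      linarith

lemma znq_abs_le {s : ℝ} (hs : 1 < s) (n : ℕ) : |znq s n| ≤ znp s n := by
  rcases Nat.eq_zero_or_pos n with h0 | h0
  · subst h0; rw [znq_zero, znp_zero]; norm_num
  · have hn : n ≠ 0 := by omega
    rw [abs_of_nonpos (znq_nonpos hs n hn)]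
    have h := znq_rec s hn
    have hmem : n ∈ Finset.Ico 1 (n + 1) := Finset.mem_Ico.mpr ⟨h0, by omega⟩
    have := Finset.single_le_sum (f := fun k => (-znq s k) * znp s (n - k))
      (fun k hk => mul_nonneg (neg_nonneg.mpr (znq_nonpos hs k (by
        have := (Finset.mem_Ico.mp hk).1; omega))) (znp_pos s _).le) hmem
    rw [h] at this
    simpa [Nat.sub_self, znp_zero] using this

lemma znq_summable {s : ℝ} (hs : 1 < s) : Summable (znq s) :=
  Summable.of_abs (Summable.of_nonneg_of_le (fun n => abs_nonneg _)
    (fun n => znq_abs_le hs n) (znp_summable hs))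

lemma znq_tsum_mul {s : ℝ} (hs : 1 < s) :
    (∑' n, znq s n) * (∑' n, znp s n) = 1 := by
  set G : PowerSeries ℝ := PowerSeries.mk (fun _ => (1 : ℝ)) with hG
  have key : ∀ N : ℕ,
      ∑ k ∈ Finset.range (N + 1), znq s k * (∑ j ∈ Finset.range (N - k + 1), znp s j) = 1 := by
    intro N
    have hPG : ∀ m : ℕ, PowerSeries.coeff m (PowerSeries.mk (znp s) * G)
        = ∑ j ∈ Finset.range (m + 1), znp s j := by
      intro m
      rw [hG, coeff_mul_mk]
      simp
    have hQPG : (PowerSeries.mk (znp s))⁻¹ * (PowerSeries.mk (znp s) * G) = G := by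
      rw [← mul_assoc, PowerSeries.inv_mul_cancel _ (znp_constantCoeff s), one_mul]
    have h := congrArg (PowerSeries.coeff N) hQPG
    rw [PowerSeries.coeff_mul, Finset.Nat.sum_antidiagonal_eq_sum_range_succ_mk] at h
    rw [hG, PowerSeries.coeff_mk] at h
    rw [← h]
    exact Finset.sum_congr rfl fun k hk => by rw [znq, hPG]
  have hden : Tendsto (fun m : ℕ => ∑ j ∈ Finset.range (m + 1), znp s j) atTop
      (nhds (∑' n, znp s n)) :=
    (znp_summable hs).hasSum.tendsto_sum_nat.comp (tendsto_add_atTop_nat 1)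
  have hconv := norlund_conv_tendsto (znq_summable hs) hden
  have hone : Tendsto (fun _ : ℕ => (1 : ℝ)) atTop
      (nhds ((∑' n, znq s n) * (∑' n, znp s n))) := by
    refine hconv.congr fun m => key m
  exact tendsto_nhds_unique hone tendsto_const_nhds

theorem zeta_weights_norlund_trivial (s : ℝ) (hs : 1 < s) (a : ℕ → ℝ) (σ : ℝ) :
    Tendsto a atTop (nhds σ) ↔
      Tendsto (fun m => (∑ n ∈ Finset.range (m + 1),
          ((m - n : ℕ) + 1 : ℝ) ^ (-s) * a n) /
        (∑ j ∈ Finset.range (m + 1), ((j : ℝ) + 1) ^ (-s))) atTop (nhds σ) := by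
  set Z : ℝ := ∑' n, znp s n with hZ
  have hZpos : 0 < Z := Summable.tsum_pos (znp_summable hs) (fun n => (znp_pos s n).le) 0 (znp_pos s 0)
  have hden : Tendsto (fun m : ℕ => ∑ j ∈ Finset.range (m + 1), znp s j) atTop (nhds Z) :=
    (znp_summable hs).hasSum.tendsto_sum_nat.comp (tendsto_add_atTop_nat 1)
  have hdenpos : ∀ m : ℕ, 0 < ∑ j ∈ Finset.range (m + 1), znp s j :=
    fun m => Finset.sum_pos (fun j _ => znp_pos s j) ⟨0, Finset.mem_range.mpr (by omega)⟩
  -- the numerator in convolved order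
  set t : ℕ → ℝ := fun m => ∑ k ∈ Finset.range (m + 1), znp s k * a (m - k) with ht
  have hnum_eq : ∀ m : ℕ, (∑ n ∈ Finset.range (m + 1),
      ((m - n : ℕ) + 1 : ℝ) ^ (-s) * a n) = t m := by
    intro m
    simp only [ht]
    rw [← Finset.sum_range_reflect (fun k => znp s k * a (m - k)) (m + 1)]
    refine Finset.sum_congr rfl fun n hn => ?_
    have hn' : n ≤ m := by have := Finset.mem_range.mp hn; omega
    have e1 : m + 1 - 1 - n = m - n := by omega
    have e2 : m - (m - n) = n := by omega
    rw [e1, e2]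
    rfl
  -- rewrite the statement's function
  have hfun : (fun m => (∑ n ∈ Finset.range (m + 1),
          ((m - n : ℕ) + 1 : ℝ) ^ (-s) * a n) /
        (∑ j ∈ Finset.range (m + 1), ((j : ℝ) + 1) ^ (-s)))
      = fun m => t m / (∑ j ∈ Finset.range (m + 1), znp s j) := by
    funext m
    rw [hnum_eq m]
    rfl
  rw [hfun]
  constructor
  · intro ha
    have h1 : Tendsto t atTop (nhds (Z * σ)) := by
      rw [ht]
      exact norlund_conv_tendsto (znp_summable hs) ha
    have h2 := h1.div hden (ne_of_gt hZpos)
    have : Z * σ / Z = σ := by field_simp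
    rwa [this] at h2
  · intro h
    have hnum : Tendsto t atTop (nhds (σ * Z)) := by
      have h2 := h.mul hden
      refine h2.congr fun m => div_mul_cancel₀ _ (ne_of_gt (hdenpos m))
    -- recovery identity
    have hrec : ∀ n : ℕ, ∑ k ∈ Finset.range (n + 1), znq s k * t (n - k) = a n := by
      intro n
      have hQPA : (PowerSeries.mk (znp s))⁻¹ * (PowerSeries.mk (znp s) * PowerSeries.mk a)
          = PowerSeries.mk a := by
        rw [← mul_assoc, PowerSeries.inv_mul_cancel _ (znp_constantCoeff s), one_mul]
      have hcoeff := congrArg (PowerSeries.coeff n) hQPA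
      rw [PowerSeries.coeff_mul, Finset.Nat.sum_antidiagonal_eq_sum_range_succ_mk,
        PowerSeries.coeff_mk] at hcoeff
      rw [← hcoeff]
      refine Finset.sum_congr rfl fun k hk => ?_
      rw [znq, coeff_mul_mk, ht]
    have hconv := norlund_conv_tendsto (znq_summable hs) hnum
    have hlim : (∑' n, znq s n) * (σ * Z) = σ := by
      have h3 := znq_tsum_mul hs
      rw [← hZ] at h3
      calc (∑' n, znq s n) * (σ * Z) = σ * ((∑' n, znq s n) * Z) := by ring
        _ = σ := by rw [h3, mul_one]
    rw [hlim] at hconv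
    exact hconv.congr hrec
end

section
/- (Eneström–Kakeya) If p_0 > p_1 > ⋯ > p_N > 0 are real numbers, then the polynomial P(x) = p_0 + p_1 x + ⋯ + p_N x^N has no complex zeros in the closed unit disc {z : |z| ≤ 1}. -/
open Finset

/-- Eneström–Kakeya theorem. -/
theorem enestrom_kakeya (N : ℕ) (p : ℕ → ℝ)
    (hdec : ∀ i < N, p (i + 1) < p i) (hpos : 0 < p N) :
    ∀ z : ℂ, ‖z‖ ≤ 1 →
      (∑ n ∈ Finset.range (N + 1), (p n : ℂ) * z ^ n) ≠ 0 := by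
  intro z hz h
  -- all coefficients are positive
  have hstep : ∀ k n, n + k ≤ N → p (n + k) ≤ p n := by
    intro k
    induction k with
    | zero => intro n _; simp
    | succ k ih =>
      intro n hn
      have h1 : p (n + k + 1) < p (n + k) := hdec (n + k) (by omega)
      have h2 : p (n + k) ≤ p n := ih n (by omega)
      have : n + (k + 1) = n + k + 1 := by omega
      rw [this]
      linarith
  have hposall : ∀ n ≤ N, 0 < p n := by
    intro n hn
    have := hstep (N - n) n (by omega)
    have hNn : n + (N - n) = N := by omega
    rw [hNn] at this
    linarith
  -- truncated coefficients
  set p' : ℕ → ℝ := fun n => if n ≤ N then p n else 0 with hp'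
  set b : ℕ → ℝ := fun n => p' n - p' (n + 1) with hb
  have hbpos : ∀ n ≤ N, 0 < b n := by
    intro n hn
    simp only [hb, hp']
    rcases eq_or_lt_of_le hn with hcase | hcase
    · simp [hcase]
      exact hpos
    · have : n + 1 ≤ N := hcase
      simp [hn, this]
      exact hdec n hcase
  -- key identity: p 0 = ∑ b n * z^(n+1)
  have hkey : (p 0 : ℂ) = ∑ n ∈ Finset.range (N + 1), (b n : ℂ) * z ^ (n + 1) := by
    have hT1 : ∑ n ∈ Finset.range (N + 1), (p' n : ℂ) * z ^ (n + 1) = 0 := by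
      have : ∑ n ∈ Finset.range (N + 1), (p' n : ℂ) * z ^ (n + 1)
          = z * ∑ n ∈ Finset.range (N + 1), (p n : ℂ) * z ^ n := by
        rw [Finset.mul_sum]
        apply Finset.sum_congr rfl
        intro n hn
        have hn' : n ≤ N := by simpa using Nat.lt_succ_iff.mp (Finset.mem_range.mp hn)
        simp [hp', hn', pow_succ]
        ring
      rw [this, h, mul_zero]
    have hT2 : ∑ n ∈ Finset.range (N + 1), (p' (n + 1) : ℂ) * z ^ (n + 1)
        = -(p 0 : ℂ) := by
      have hs := Finset.sum_range_succ' (fun m => (p' m : ℂ) * z ^ m) (N + 1)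
      have hfull : ∑ m ∈ Finset.range (N + 2), (p' m : ℂ) * z ^ m = 0 := by
        rw [Finset.sum_range_succ]
        have hN1 : p' (N + 1) = 0 := by simp [hp']
        rw [hN1]
        simp only [Complex.ofReal_zero, zero_mul, add_zero]
        rw [← h]
        apply Finset.sum_congr rfl
        intro n hn
        have hn' : n ≤ N := Nat.lt_succ_iff.mp (Finset.mem_range.mp hn)
        simp [hp', hn']
      rw [hfull] at hs
      have h0 : (p' 0 : ℂ) * z ^ 0 = (p 0 : ℂ) := by simp [hp']
      rw [h0] at hs
      linear_combination -hs
    calc (p 0 : ℂ) = 0 - (-(p 0 : ℂ)) := by ring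
    _ = ∑ n ∈ Finset.range (N + 1), (p' n : ℂ) * z ^ (n + 1)
        - ∑ n ∈ Finset.range (N + 1), (p' (n + 1) : ℂ) * z ^ (n + 1) := by
        rw [hT1, hT2]
    _ = ∑ n ∈ Finset.range (N + 1), (b n : ℂ) * z ^ (n + 1) := by
        rw [← Finset.sum_sub_distrib]
        apply Finset.sum_congr rfl
        intro n _
        simp [hb]
        ring
  -- take real parts
  have hre : p 0 = ∑ n ∈ Finset.range (N + 1), b n * (z ^ (n + 1)).re := by
    have := congrArg Complex.re hkey
    simpa [Complex.re_sum] using this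
  have hsumb : ∑ n ∈ Finset.range (N + 1), b n = p 0 := by
    have := Finset.sum_range_sub' p' (N + 1)
    simp only [hb]
    rw [this]
    simp [hp']
  have hle : ∀ n ∈ Finset.range (N + 1), b n * (z ^ (n + 1)).re ≤ b n := by
    intro n hn
    have hn' : n ≤ N := Nat.lt_succ_iff.mp (Finset.mem_range.mp hn)
    have h1 : (z ^ (n + 1)).re ≤ 1 := by
      calc (z ^ (n + 1)).re ≤ ‖z ^ (n + 1)‖ := Complex.re_le_norm _
      _ = ‖z‖ ^ (n + 1) := by rw [norm_pow]
      _ ≤ 1 := pow_le_one₀ (norm_nonneg z) hz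
    nlinarith [hbpos n hn']
  have heq : ∀ n ∈ Finset.range (N + 1), b n * (z ^ (n + 1)).re = b n := by
    have hsum : ∑ n ∈ Finset.range (N + 1), b n * (z ^ (n + 1)).re
        = ∑ n ∈ Finset.range (N + 1), b n := by rw [← hre, hsumb]
    intro n hn
    by_contra hne
    have hlt : b n * (z ^ (n + 1)).re < b n := lt_of_le_of_ne (hle n hn) hne
    have := Finset.sum_lt_sum (f := fun n => b n * (z ^ (n + 1)).re)
      (g := b) hle ⟨n, hn, hlt⟩
    rw [hsum] at this
    exact lt_irrefl _ this
  -- conclude z = 1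
  have h0 := heq 0 (Finset.mem_range.mpr (by omega))
  have hb0 : 0 < b 0 := hbpos 0 (Nat.zero_le N)
  have hzre : z.re = 1 := by
    have : b 0 * (z ^ 1).re = b 0 := h0
    rw [pow_one] at this
    have h2 : b 0 * z.re = b 0 * 1 := by linarith
    exact mul_left_cancel₀ (ne_of_gt hb0) h2
  have hzim : z.im = 0 := by
    have h1 : ‖z‖ ^ 2 ≤ 1 := by nlinarith [norm_nonneg z]
    rw [Complex.sq_norm, Complex.normSq_apply, hzre] at h1
    nlinarith
  have hz1 : z = 1 := by
    apply Complex.ext <;> simp [hzre, hzim]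
  rw [hz1] at h
  simp only [one_pow, mul_one] at h
  rw [← Complex.ofReal_sum] at h
  have : ∑ n ∈ Finset.range (N + 1), p n = 0 := by exact_mod_cast h
  have hpossum : 0 < ∑ n ∈ Finset.range (N + 1), p n := by
    apply Finset.sum_pos
    · intro n hn
      exact hposall n (Nat.lt_succ_iff.mp (Finset.mem_range.mp hn))
    · exact ⟨0, Finset.mem_range.mpr (by omega)⟩
  linarith
end

section
/- Let p_0 > p_1 > ⋯ > p_N > 0 and p_n = 0 for n > N. Then the Nörlund method (N,p) is trivial: a sequence s converges to σ in the ordinary sense if and only if the Nörlund means t_m = (∑_{n=0}^m p_{m−n} s_n)/(∑_{k≤min(m,N)} p_k) converge to σ. -/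
open Filter Finset

noncomputable def nrlC (p : ℕ → ℝ) (k : ℕ) : ℝ := PowerSeries.coeff k (PowerSeries.mk p)⁻¹
noncomputable def nrlB (p : ℕ → ℝ) (k : ℕ) : ℝ := ∑ i ∈ Finset.range (k+1), nrlC p i

lemma nrl_mul_inv (p : ℕ → ℝ) (h0 : p 0 ≠ 0) :
    (PowerSeries.mk p) * (PowerSeries.mk p)⁻¹ = 1 := by
  apply PowerSeries.mul_inv_cancel
  simpa using h0

lemma nrlB_series (p : ℕ → ℝ) :
    PowerSeries.mk (nrlB p) = (PowerSeries.mk p)⁻¹ * PowerSeries.mk (fun _ => (1:ℝ)) := by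
  ext k
  rw [PowerSeries.coeff_mk, PowerSeries.coeff_mul,
    Finset.Nat.sum_antidiagonal_eq_sum_range_succ_mk]
  simp [nrlB, nrlC]

lemma nrl_A (p : ℕ → ℝ) (h0 : p 0 ≠ 0) (k : ℕ) :
    ∑ j ∈ Finset.range (k+1), p j * nrlB p (k - j) = 1 := by
  have h : PowerSeries.mk p * PowerSeries.mk (nrlB p) = PowerSeries.mk (fun _ => (1:ℝ)) := by
    rw [nrlB_series, ← mul_assoc, nrl_mul_inv p h0, one_mul]
  have := congrArg (PowerSeries.coeff k) h
  rw [PowerSeries.coeff_mul, Finset.Nat.sum_antidiagonal_eq_sum_range_succ_mk] at this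
  simpa using this

-- convolution inversion identity
lemma nrl_inv_identity (p s : ℕ → ℝ) (h0 : p 0 ≠ 0) (m : ℕ) :
    s m = ∑ k ∈ Finset.range (m+1),
      nrlC p k * (∑ n ∈ Finset.range (m - k + 1), p (m - k - n) * s n) := by
  have h : (PowerSeries.mk p)⁻¹ * (PowerSeries.mk p * PowerSeries.mk s) = PowerSeries.mk s := by
    rw [← mul_assoc, mul_comm (PowerSeries.mk p)⁻¹, nrl_mul_inv p h0, one_mul]
  have h2 := congrArg (PowerSeries.coeff m) h
  rw [PowerSeries.coeff_mul, Finset.Nat.sum_antidiagonal_eq_sum_range_succ_mk] at h2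
  rw [PowerSeries.coeff_mk] at h2
  rw [← h2]
  apply Finset.sum_congr rfl
  intro k hk
  congr 1
  rw [PowerSeries.coeff_mul, Finset.Nat.sum_antidiagonal_eq_sum_range_succ_mk]
  simp only [PowerSeries.coeff_mk]
  -- ∑ j ∈ range (m-k+1), p j * s (m-k-j) = ∑ n ∈ range (m-k+1), p (m-k-n) * s n
  have := Finset.sum_range_reflect (fun j => p (m - k - j) * s j) (m - k + 1)
  rw [← this]
  apply Finset.sum_congr rfl
  intro j hj
  simp only [Finset.mem_range] at hj
  have hj' : j ≤ m - k := Nat.lt_succ_iff.mp hj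
  congr 2 <;> omega
lemma nrl_rec (p : ℕ → ℝ) (h0 : p 0 ≠ 0) (k : ℕ) :
    p 0 * nrlB p (k+1) = ∑ j ∈ Finset.range (k+1), (p j - p (j+1)) * nrlB p (k - j) := by
  have hA1 := nrl_A p h0 (k+1)
  have hA0 := nrl_A p h0 k
  rw [Finset.sum_range_succ'] at hA1
  simp only [Nat.sub_zero, Nat.succ_sub_succ] at hA1
  -- hA1 : ∑ i ∈ range (k+1), p (i+1) * nrlB p (k - i) + p 0 * nrlB p (k+1) = 1
  have : p 0 * nrlB p (k+1) =
      ∑ j ∈ Finset.range (k+1), p j * nrlB p (k - j)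
      - ∑ i ∈ Finset.range (k+1), p (i+1) * nrlB p (k - i) := by
    rw [hA0]; linarith
  rw [this, ← Finset.sum_sub_distrib]
  apply Finset.sum_congr rfl
  intro j hj; ring

section

variable (N : ℕ) (p : ℕ → ℝ)

lemma nrl_ppos (hdec : ∀ i < N, p (i + 1) < p i) (hpos : 0 < p N) :
    ∀ j ≤ N, 0 < p j := by
  intro j hj
  induction N with
  | zero => simpa [Nat.le_zero.mp hj] using hpos
  | succ n ih =>
    rcases Nat.lt_or_ge j (n+1) with h | h
    · have hj' : j ≤ n := by omega
      apply ih (fun i hi => hdec i (by omega))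
      · calc 0 < p (n+1) := hpos
          _ < p n := hdec n (by omega)
      · exact hj'
    · have : j = n+1 := by omega
      simpa [this] using hpos

lemma nrl_gap_pos (hdec : ∀ i < N, p (i + 1) < p i) (hpos : 0 < p N)
    (hzero : ∀ n > N, p n = 0) : ∀ j ≤ N, 0 < p j - p (j+1) := by
  intro j hj
  rcases Nat.lt_or_ge j N with h | h
  · have := hdec j h; linarith
  · have hjN : j = N := by omega
    rw [hjN, hzero (N+1) (by omega)]
    simpa using hpos

lemma nrl_gap_sum (hzero : ∀ n > N, p n = 0) :
    ∑ j ∈ Finset.range (N+1), (p j - p (j+1)) = p 0 := by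
  rw [Finset.sum_range_sub' p (N+1)]
  rw [hzero (N+1) (by omega)]
  ring

-- recursion in averaged form, truncated
lemma nrl_rec_trunc (h0 : p 0 ≠ 0) (hzero : ∀ n > N, p n = 0) (k : ℕ) (hk : N ≤ k) :
    nrlB p (k+1) = ∑ j ∈ Finset.range (N+1), ((p j - p (j+1)) / p 0) * nrlB p (k - j) := by
  have h := nrl_rec p h0 k
  have htr : ∑ j ∈ Finset.range (k+1), (p j - p (j+1)) * nrlB p (k - j)
      = ∑ j ∈ Finset.range (N+1), (p j - p (j+1)) * nrlB p (k - j) := by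
    symm
    apply Finset.sum_subset
    · exact Finset.range_subset_range.mpr (by omega)
    · intro j hj hj'
      simp only [Finset.mem_range] at hj hj'
      rw [hzero j (by omega), hzero (j+1) (by omega)]
      ring
  rw [htr] at h
  have : nrlB p (k+1) = (∑ j ∈ Finset.range (N+1), (p j - p (j+1)) * nrlB p (k - j)) / p 0 := by
    field_simp
    linarith [h]
  rw [this, Finset.sum_div]
  apply Finset.sum_congr rfl
  intro j hj; ring

-- truncated A identity
lemma nrl_A_trunc (h0 : p 0 ≠ 0) (hzero : ∀ n > N, p n = 0) (k : ℕ) (hk : N ≤ k) :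
    ∑ j ∈ Finset.range (N+1), p j * nrlB p (k - j) = 1 := by
  rw [← nrl_A p h0 k]
  apply Finset.sum_subset
  · exact Finset.range_subset_range.mpr (by omega)
  · intro j hj hj'
    simp only [Finset.mem_range] at hj hj'
    rw [hzero j (by omega)]
    ring

end
theorem nrl_windows (N : ℕ) (w b : ℕ → ℝ)
    (hw : ∀ j, j ≤ N → 0 < w j)
    (hw1 : ∑ j ∈ Finset.range (N+1), w j = 1)
    (hrec : ∀ k, N ≤ k → b (k+1) = ∑ j ∈ Finset.range (N+1), w j * b (k - j)) :
    Summable (fun k => |b (k+1) - b k|) := by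
  have hne : (Finset.range (N+1)).Nonempty := Finset.nonempty_range_add_one
  set Mx : ℕ → ℝ := fun k => (Finset.range (N+1)).sup' hne (fun i => b (k+i)) with hMxdef
  set mn : ℕ → ℝ := fun k => (Finset.range (N+1)).inf' hne (fun i => b (k+i)) with hmndef
  set θ : ℝ := (Finset.range (N+1)).inf' hne w with hθdef
  have hθpos : 0 < θ := by
    rw [hθdef, Finset.lt_inf'_iff]
    intro j hj
    exact hw j (by simpa using Nat.lt_succ_iff.mp (Finset.mem_range.mp hj))
  have hθw : ∀ j ∈ Finset.range (N+1), θ ≤ w j := fun j hj => Finset.inf'_le _ hj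
  have hwle1 : ∀ j ∈ Finset.range (N+1), w j ≤ 1 := by
    intro j hj
    rw [← hw1]
    apply Finset.single_le_sum (fun i hi => (hw i (Nat.lt_succ_iff.mp (Finset.mem_range.mp hi))).le) hj
  have h0mem : (0:ℕ) ∈ Finset.range (N+1) := Finset.mem_range.mpr (by omega)
  have hθ1 : θ ≤ 1 := le_trans (hθw 0 h0mem) (hwle1 0 h0mem)
  -- convex combination bound
  have hconv : ∀ (m : ℕ) (B E : ℝ) (js : ℕ), N ≤ m → 0 ≤ E →
      (∀ j ∈ Finset.range (N+1), b (m - j) ≤ B) → js ∈ Finset.range (N+1) →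
      b (m - js) ≤ B - E → b (m+1) ≤ B - θ * E := by
    intro m B E js hm hE hall hjs hsmall
    rw [hrec m hm]
    have step1 : ∑ j ∈ Finset.range (N+1), w j * b (m - j)
        ≤ ∑ j ∈ Finset.range (N+1), w j * (B - if j = js then E else 0) := by
      apply Finset.sum_le_sum
      intro j hj
      apply mul_le_mul_of_nonneg_left _ (hw j (Nat.lt_succ_iff.mp (Finset.mem_range.mp hj))).le
      by_cases h : j = js
      · subst h; simpa using hsmall
      · simpa [h] using hall j hj
    have step2 : ∑ j ∈ Finset.range (N+1), w j * (B - if j = js then E else 0)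
        = B - w js * E := by
      have : ∀ j ∈ Finset.range (N+1), w j * (B - if j = js then E else 0)
          = w j * B - (if j = js then w js * E else 0) := by
        intro j hj
        by_cases h : j = js
        · subst h; simp; ring
        · simp [h]
      rw [Finset.sum_congr rfl this, Finset.sum_sub_distrib, ← Finset.sum_mul, hw1,
        Finset.sum_ite_eq' _ js, if_pos hjs]
      ring
    have step3 : B - w js * E ≤ B - θ * E := by
      have := hθw js hjs
      nlinarith
    linarith
  -- uniform bounds
  have hM : ∀ k i, b (k+i) ≤ Mx k := by
    intro k i
    induction i using Nat.strong_induction_on with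
    | _ i ih =>
      rcases le_or_gt i N with h | h
      · exact Finset.le_sup' (fun i => b (k+i)) (Finset.mem_range.mpr (by omega))
      · have hm1 : N ≤ k + i - 1 := by omega
        have hki : k + i = (k + i - 1) + 1 := by omega
        rw [hki, hrec _ hm1]
        calc ∑ j ∈ Finset.range (N+1), w j * b (k+i-1-j)
            ≤ ∑ j ∈ Finset.range (N+1), w j * Mx k := by
              apply Finset.sum_le_sum
              intro j hj
              have hj' : j ≤ N := Nat.lt_succ_iff.mp (Finset.mem_range.mp hj)
              apply mul_le_mul_of_nonneg_left _ (hw j hj').le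
              have he : k + i - 1 - j = k + (i - 1 - j) := by omega
              rw [he]
              exact ih _ (by omega)
          _ = Mx k := by rw [← Finset.sum_mul, hw1, one_mul]
  have hm : ∀ k i, mn k ≤ b (k+i) := by
    intro k i
    induction i using Nat.strong_induction_on with
    | _ i ih =>
      rcases le_or_gt i N with h | h
      · exact Finset.inf'_le (fun i => b (k+i)) (Finset.mem_range.mpr (by omega))
      · have hm1 : N ≤ k + i - 1 := by omega
        have hki : k + i = (k + i - 1) + 1 := by omega
        rw [hki, hrec _ hm1]
        calc mn k = ∑ j ∈ Finset.range (N+1), w j * mn k := by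
              rw [← Finset.sum_mul, hw1, one_mul]
          _ ≤ ∑ j ∈ Finset.range (N+1), w j * b (k+i-1-j) := by
              apply Finset.sum_le_sum
              intro j hj
              have hj' : j ≤ N := Nat.lt_succ_iff.mp (Finset.mem_range.mp hj)
              apply mul_le_mul_of_nonneg_left _ (hw j hj').le
              have he : k + i - 1 - j = k + (i - 1 - j) := by omega
              rw [he]
              exact ih _ (by omega)
  have hMle : ∀ k i, Mx (k+i) ≤ Mx k := by
    intro k i
    apply Finset.sup'_le
    intro j hj
    have : k + i + j = k + (i + j) := by omega
    rw [this]
    exact hM k (i+j)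
  have hmge : ∀ k i, mn k ≤ mn (k+i) := by
    intro k i
    apply Finset.le_inf'
    intro j hj
    have : k + i + j = k + (i + j) := by omega
    rw [this]
    exact hm k (i+j)
  have hD0 : ∀ k, 0 ≤ Mx k - mn k := by
    intro k
    have h1 := hm k 0
    have h2 := hM k 0
    simp only [Nat.add_zero] at h1 h2
    linarith
  -- chain of small values
  have hchain : ∀ k a t, a ≤ N → b (k + a) = mn k →
      b (k + a + t*(N+1)) ≤ Mx k - θ^t * (Mx k - mn k) := by
    intro k a t ha hba
    induction t with
    | zero => simp [hba]
    | succ t ih =>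
      have hidx : k + a + (t+1)*(N+1) = (k + a + t*(N+1) + N) + 1 := by ring
      set m := k + a + t*(N+1) + N with hmdef
      have hmN : N ≤ m := by omega
      rw [hidx]
      have hE : 0 ≤ θ^t * (Mx k - mn k) :=
        mul_nonneg (pow_nonneg hθpos.le t) (hD0 k)
      have hall : ∀ j ∈ Finset.range (N+1), b (m - j) ≤ Mx k := by
        intro j hj
        have hj' : j ≤ N := Nat.lt_succ_iff.mp (Finset.mem_range.mp hj)
        have : m - j = k + (a + t*(N+1) + N - j) := by omega
        rw [this]
        exact hM k _
      have hNmem : N ∈ Finset.range (N+1) := Finset.mem_range.mpr (by omega)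
      have hsm : b (m - N) ≤ Mx k - θ^t * (Mx k - mn k) := by
        have : m - N = k + a + t*(N+1) := by omega
        rw [this]
        exact ih
      have := hconv m (Mx k) (θ^t * (Mx k - mn k)) N hmN hE hall hNmem hsm
      calc b (m+1) ≤ Mx k - θ * (θ^t * (Mx k - mn k)) := this
        _ = Mx k - θ^(t+1) * (Mx k - mn k) := by ring
  -- contraction step
  have hstep : ∀ k r, r ≤ N →
      b (k + 2*(N+1) + r) ≤ Mx k - θ^3 * (Mx k - mn k) := by
    intro k r hr
    obtain ⟨a, hamem, hba⟩ := Finset.exists_mem_eq_inf' hne (fun i => b (k+i))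
    have ha : a ≤ N := Nat.lt_succ_iff.mp (Finset.mem_range.mp hamem)
    have hba' : b (k + a) = mn k := hba.symm
    have hidx : k + 2*(N+1) + r = (k + 2*(N+1) + r - 1) + 1 := by omega
    set m := k + 2*(N+1) + r - 1 with hmdef
    have hmN : N ≤ m := by omega
    have hall : ∀ j ∈ Finset.range (N+1), b (m - j) ≤ Mx k := by
      intro j hj
      have hj' : j ≤ N := Nat.lt_succ_iff.mp (Finset.mem_range.mp hj)
      have : m - j = k + (2*(N+1) + r - 1 - j) := by omega
      rw [this]
      exact hM k _
    have hE : 0 ≤ θ^2 * (Mx k - mn k) :=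
      mul_nonneg (pow_nonneg hθpos.le 2) (hD0 k)
    have hθ21 : θ^2 ≤ θ^1 := pow_le_pow_of_le_one hθpos.le hθ1 (by omega)
    by_cases hcase : a + 1 ≤ r
    · -- use t = 2, js = r - a - 1
      have hjs : r - a - 1 ∈ Finset.range (N+1) := Finset.mem_range.mpr (by omega)
      have hidx2 : m - (r - a - 1) = k + a + 2*(N+1) := by omega
      have hsm : b (m - (r - a - 1)) ≤ Mx k - θ^2 * (Mx k - mn k) := by
        rw [hidx2]
        exact hchain k a 2 ha hba'
      have := hconv m (Mx k) (θ^2 * (Mx k - mn k)) (r - a - 1) hmN hE hall hjs hsm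
      rw [hidx]
      calc b (m+1) ≤ Mx k - θ * (θ^2 * (Mx k - mn k)) := this
        _ = Mx k - θ^3 * (Mx k - mn k) := by ring
    · -- use t = 1, js = N + r - a
      have hjs : N + r - a ∈ Finset.range (N+1) := Finset.mem_range.mpr (by omega)
      have hidx2 : m - (N + r - a) = k + a + 1*(N+1) := by omega
      have hsm : b (m - (N + r - a)) ≤ Mx k - θ^2 * (Mx k - mn k) := by
        rw [hidx2]
        have h1 := hchain k a 1 ha hba'
        have : θ^2 * (Mx k - mn k) ≤ θ^1 * (Mx k - mn k) :=
          mul_le_mul_of_nonneg_right hθ21 (hD0 k)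
        linarith
      have := hconv m (Mx k) (θ^2 * (Mx k - mn k)) (N + r - a) hmN hE hall hjs hsm
      rw [hidx]
      calc b (m+1) ≤ Mx k - θ * (θ^2 * (Mx k - mn k)) := this
        _ = Mx k - θ^3 * (Mx k - mn k) := by ring
  -- contraction of oscillation
  have hDcontr : ∀ k, Mx (k + 2*(N+1)) - mn (k + 2*(N+1))
      ≤ (1 - θ^3) * (Mx k - mn k) := by
    intro k
    have h1 : Mx (k + 2*(N+1)) ≤ Mx k - θ^3 * (Mx k - mn k) := by
      apply Finset.sup'_le
      intro j hj
      exact hstep k j (Nat.lt_succ_iff.mp (Finset.mem_range.mp hj))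
    have h2 : mn k ≤ mn (k + 2*(N+1)) := hmge k _
    nlinarith [hD0 k]
  have hDanti : ∀ k i, Mx (k+i) - mn (k+i) ≤ Mx k - mn k := by
    intro k i
    have := hMle k i
    have := hmge k i
    linarith
  set γ : ℝ := 1 - θ^3 with hγdef
  have hθ3pos : 0 < θ^3 := pow_pos hθpos 3
  have hθ3le1 : θ^3 ≤ 1 := pow_le_one₀ hθpos.le hθ1
  have hγ0 : 0 ≤ γ := by rw [hγdef]; linarith
  have hγ1 : γ < 1 := by rw [hγdef]; linarith
  set K := 2*(N+1) with hKdef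
  have hK : 0 < K := by omega
  have hgeo : ∀ t, Mx (K*t) - mn (K*t) ≤ γ^t * (Mx 0 - mn 0) := by
    intro t
    induction t with
    | zero => simp
    | succ t ih =>
      have hidx : K*(t+1) = K*t + K := by ring
      rw [hidx]
      calc Mx (K*t + K) - mn (K*t + K) ≤ γ * (Mx (K*t) - mn (K*t)) := hDcontr (K*t)
        _ ≤ γ * (γ^t * (Mx 0 - mn 0)) := mul_le_mul_of_nonneg_left ih hγ0
        _ = γ^(t+1) * (Mx 0 - mn 0) := by ring
  have hDk : ∀ k, Mx k - mn k ≤ γ^(k / K) * (Mx 0 - mn 0) := by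
    intro k
    have hsplit : k = K * (k / K) + k % K := (Nat.div_add_mod k K).symm
    calc Mx k - mn k = Mx (K * (k / K) + k % K) - mn (K * (k / K) + k % K) := by rw [← hsplit]
      _ ≤ Mx (K * (k / K)) - mn (K * (k / K)) := hDanti _ _
      _ ≤ γ^(k / K) * (Mx 0 - mn 0) := hgeo _
  -- geometric sum bound
  have hsum_geo : ∀ n, ∑ k ∈ Finset.range n, γ^(k / K) ≤ (K : ℝ) * (1-γ)⁻¹ := by
    intro n
    have hnonneg : ∀ k, (0:ℝ) ≤ γ^(k / K) := fun k => pow_nonneg hγ0 _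
    have step1 : ∑ k ∈ Finset.range n, γ^(k / K) ≤ ∑ k ∈ Finset.range (K*n), γ^(k / K) := by
      apply Finset.sum_le_sum_of_subset_of_nonneg
      · exact Finset.range_subset_range.mpr (Nat.le_mul_of_pos_left n hK)
      · intro i _ _; exact hnonneg i
    have step2 : ∀ n', ∑ k ∈ Finset.range (K*n'), γ^(k / K) = ∑ t ∈ Finset.range n', (K:ℝ) * γ^t := by
      intro n'
      induction n' with
      | zero => simp
      | succ n' ih =>
        have hidx : K*(n'+1) = K*n' + K := by ring
        rw [hidx, Finset.sum_range_add, ih, Finset.sum_range_succ]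
        congr 1
        have : ∀ i ∈ Finset.range K, γ^((K*n' + i) / K) = γ^n' := by
          intro i hi
          have hiK : i < K := Finset.mem_range.mp hi
          have : (K*n' + i) / K = n' := by
            rw [Nat.mul_add_div hK]
            simp [Nat.div_eq_of_lt hiK]
          rw [this]
        rw [Finset.sum_congr rfl this, Finset.sum_const, Finset.card_range, nsmul_eq_mul]
    have step3 : ∑ t ∈ Finset.range n, (K:ℝ) * γ^t ≤ (K:ℝ) * (1-γ)⁻¹ := by
      rw [← Finset.mul_sum]
      apply mul_le_mul_of_nonneg_left _ (by positivity)
      exact sum_le_hasSum _ (fun i _ => pow_nonneg hγ0 i) (hasSum_geometric_of_lt_one hγ0 hγ1)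
    calc ∑ k ∈ Finset.range n, γ^(k / K) ≤ ∑ k ∈ Finset.range (K*n), γ^(k / K) := step1
      _ = ∑ t ∈ Finset.range n, (K:ℝ) * γ^t := step2 n
      _ ≤ (K:ℝ) * (1-γ)⁻¹ := step3
  -- increments bounded by oscillation
  have hcb : ∀ k, |b (k+1) - b k| ≤ Mx k - mn k := by
    intro k
    have h1 := hm k 0
    have h2 := hM k 0
    have h3 := hm k 1
    have h4 := hM k 1
    simp only [Nat.add_zero] at h1 h2
    rw [abs_le]
    constructor <;> linarith
  -- conclude summability
  apply summable_of_sum_range_le (fun k => abs_nonneg _)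
  intro n
  show ∑ k ∈ Finset.range n, |b (k+1) - b k| ≤ (K:ℝ) * (1-γ)⁻¹ * (Mx 0 - mn 0)
  calc ∑ k ∈ Finset.range n, |b (k+1) - b k|
      ≤ ∑ k ∈ Finset.range n, γ^(k / K) * (Mx 0 - mn 0) := by
        apply Finset.sum_le_sum
        intro k _
        exact le_trans (hcb k) (hDk k)
    _ = (∑ k ∈ Finset.range n, γ^(k / K)) * (Mx 0 - mn 0) := by rw [Finset.sum_mul]
    _ ≤ (K:ℝ) * (1-γ)⁻¹ * (Mx 0 - mn 0) :=
        mul_le_mul_of_nonneg_right (hsum_geo n) (hD0 0)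
theorem nrl_conv_tendsto (c q : ℕ → ℝ) (L β : ℝ)
    (hc : Summable (fun k => |c k|))
    (hq : Tendsto q atTop (nhds L))
    (hβ : Tendsto (fun m => ∑ k ∈ Finset.range (m+1), c k) atTop (nhds β)) :
    Tendsto (fun m => ∑ k ∈ Finset.range (m+1), c k * q (m - k)) atTop (nhds (β * L)) := by
  set C := ∑' k, |c k| with hCdef
  have hCnn : 0 ≤ C := tsum_nonneg (fun k => abs_nonneg _)
  have hpart : ∀ (F : Finset ℕ), ∑ k ∈ F, |c k| ≤ C :=
    fun F => Summable.sum_le_tsum F (fun k _ => abs_nonneg _) hc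
  -- boundedness of |q j - L|
  obtain ⟨J, hJ⟩ : ∃ J, ∀ j ≥ J, |q j - L| ≤ 1 := by
    have := Metric.tendsto_atTop.mp hq 1 one_pos
    obtain ⟨J, hJ⟩ := this
    exact ⟨J, fun j hj => by have := hJ j hj; rw [Real.dist_eq] at this; linarith⟩
  set Q : ℝ := 1 + ∑ j ∈ Finset.range J, |q j - L| with hQdef
  have hQ1 : (1:ℝ) ≤ Q := by
    rw [hQdef]
    have : (0:ℝ) ≤ ∑ j ∈ Finset.range J, |q j - L| :=
      Finset.sum_nonneg (fun j _ => abs_nonneg _)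
    linarith
  have hQ : ∀ j, |q j - L| ≤ Q := by
    intro j
    rcases le_or_gt J j with h | h
    · exact le_trans (hJ j h) hQ1
    · rw [hQdef]
      have : |q j - L| ≤ ∑ i ∈ Finset.range J, |q i - L| :=
        Finset.single_le_sum (f := fun i => |q i - L|) (fun i _ => abs_nonneg _)
          (Finset.mem_range.mpr h)
      linarith
  -- key: convolution with (q - L) tends to 0
  have key : Tendsto (fun m => ∑ k ∈ Finset.range (m+1), c k * (q (m-k) - L)) atTop (nhds 0) := by
    rw [Metric.tendsto_atTop]
    intro ε hε
    set ε' := ε / (2 * (C + Q + 1)) with hε'def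
    have hden : (0:ℝ) < C + Q + 1 := by linarith
    have hε' : 0 < ε' := by positivity
    -- tail of c small
    obtain ⟨T, hT⟩ : ∃ T, C - ∑ k ∈ Finset.range T, |c k| < ε' := by
      have htend := hc.hasSum.tendsto_sum_nat
      have := Metric.tendsto_atTop.mp htend ε' hε'
      obtain ⟨T, hT⟩ := this
      refine ⟨T, ?_⟩
      have := hT T le_rfl
      rw [Real.dist_eq, abs_sub_lt_iff] at this
      linarith [this.2]
    obtain ⟨M₁, hM₁⟩ : ∃ M₁, ∀ j ≥ M₁, |q j - L| ≤ ε' := by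
      obtain ⟨M₁, hM₁⟩ := Metric.tendsto_atTop.mp hq ε' hε'
      exact ⟨M₁, fun j hj => by have := hM₁ j hj; rw [Real.dist_eq] at this; linarith⟩
    refine ⟨T + M₁, fun m hm => ?_⟩
    rw [Real.dist_eq, sub_zero]
    have hTm : T ≤ m + 1 := by omega
    have habs : |∑ k ∈ Finset.range (m+1), c k * (q (m-k) - L)|
        ≤ ∑ k ∈ Finset.range (m+1), |c k| * |q (m-k) - L| := by
      refine le_trans (Finset.abs_sum_le_sum_abs _ _) ?_
      apply Finset.sum_le_sum
      intro k _
      rw [abs_mul]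
    have hsplit : ∑ k ∈ Finset.range (m+1), |c k| * |q (m-k) - L|
        = ∑ k ∈ Finset.range T, |c k| * |q (m-k) - L|
          + ∑ i ∈ Finset.range (m+1-T), |c (T+i)| * |q (m-(T+i)) - L| := by
      have : m + 1 = T + (m+1-T) := by omega
      rw [this, Finset.sum_range_add]
      have : T + (m+1-T) = m+1 := by omega
      rw [this]
    have h1 : ∑ k ∈ Finset.range T, |c k| * |q (m-k) - L| ≤ C * ε' := by
      calc ∑ k ∈ Finset.range T, |c k| * |q (m-k) - L|
          ≤ ∑ k ∈ Finset.range T, |c k| * ε' := by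
            apply Finset.sum_le_sum
            intro k hk
            apply mul_le_mul_of_nonneg_left _ (abs_nonneg _)
            apply hM₁
            have := Finset.mem_range.mp hk
            omega
        _ = (∑ k ∈ Finset.range T, |c k|) * ε' := by rw [Finset.sum_mul]
        _ ≤ C * ε' := mul_le_mul_of_nonneg_right (hpart _) hε'.le
    have h2 : ∑ i ∈ Finset.range (m+1-T), |c (T+i)| * |q (m-(T+i)) - L| ≤ ε' * Q := by
      have htail : ∑ i ∈ Finset.range (m+1-T), |c (T+i)| ≤ ε' := by
        have hsum : ∑ k ∈ Finset.range T, |c k| + ∑ i ∈ Finset.range (m+1-T), |c (T+i)|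
            = ∑ k ∈ Finset.range (m+1), |c k| := by
          have h3 : m + 1 = T + (m+1-T) := by omega
          rw [h3, Finset.sum_range_add]
          have h4 : T + (m+1-T) - T = m+1-T := by omega
          rw [h4]
        have := hpart (Finset.range (m+1))
        have := hT
        linarith
      calc ∑ i ∈ Finset.range (m+1-T), |c (T+i)| * |q (m-(T+i)) - L|
          ≤ ∑ i ∈ Finset.range (m+1-T), |c (T+i)| * Q := by
            apply Finset.sum_le_sum
            intro i _
            exact mul_le_mul_of_nonneg_left (hQ _) (abs_nonneg _)
        _ = (∑ i ∈ Finset.range (m+1-T), |c (T+i)|) * Q := by rw [Finset.sum_mul]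
        _ ≤ ε' * Q := mul_le_mul_of_nonneg_right htail (by linarith)
    have : |∑ k ∈ Finset.range (m+1), c k * (q (m-k) - L)| ≤ ε' * (C + Q) := by
      rw [hsplit] at habs
      calc |∑ k ∈ Finset.range (m+1), c k * (q (m-k) - L)|
          ≤ C * ε' + ε' * Q := by linarith
        _ = ε' * (C + Q) := by ring
    calc |∑ k ∈ Finset.range (m+1), c k * (q (m-k) - L)| ≤ ε' * (C + Q) := this
      _ < ε' * (2 * (C + Q + 1)) := by
          apply mul_lt_mul_of_pos_left _ hε'
          linarith
      _ = ε := by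
          rw [hε'def]
          field_simp
    -- done
  have hfinal : (fun m => ∑ k ∈ Finset.range (m+1), c k * q (m - k))
      = fun m => (∑ k ∈ Finset.range (m+1), c k * (q (m-k) - L))
        + (∑ k ∈ Finset.range (m+1), c k) * L := by
    funext m
    rw [Finset.sum_mul, ← Finset.sum_add_distrib]
    apply Finset.sum_congr rfl
    intro k _
    ring
  rw [hfinal]
  have := key.add (hβ.mul_const L)
  simpa using this

theorem finitely_supported_decreasing_norlund_trivial (N : ℕ) (p : ℕ → ℝ)
    (hdec : ∀ i < N, p (i + 1) < p i) (hpos : 0 < p N)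
    (hzero : ∀ n > N, p n = 0) (s : ℕ → ℝ) (σ : ℝ) :
    Tendsto s atTop (nhds σ) ↔
      Tendsto (fun m => (∑ n ∈ Finset.range (m + 1), p (m - n) * s n) /
        (∑ k ∈ Finset.range (min m N + 1), p k)) atTop (nhds σ) := by
  have hppos := nrl_ppos N p hdec hpos
  have hp0 : 0 < p 0 := hppos 0 (Nat.zero_le N)
  have h0 : p 0 ≠ 0 := hp0.ne'
  set P : ℝ := ∑ k ∈ Finset.range (N+1), p k with hPdef
  have hP : 0 < P := by
    rw [hPdef]
    apply Finset.sum_pos (fun j hj => hppos j (Nat.lt_succ_iff.mp (Finset.mem_range.mp hj)))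
      Finset.nonempty_range_add_one
  -- reflection of the numerator
  have hrefl : ∀ m, ∑ n ∈ Finset.range (m+1), p (m-n) * s n
      = ∑ j ∈ Finset.range (m+1), p j * s (m-j) := by
    intro m
    have h := Finset.sum_range_reflect (fun j => p (m - j) * s j) (m+1)
    rw [← h]
    apply Finset.sum_congr rfl
    intro j hj
    have hj' : j ≤ m := Nat.lt_succ_iff.mp (Finset.mem_range.mp hj)
    congr 2 <;> omega
  -- eventual form of the Norlund mean
  have hEq : ∀ m, N ≤ m →
      (∑ n ∈ Finset.range (m + 1), p (m - n) * s n) /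
        (∑ k ∈ Finset.range (min m N + 1), p k)
      = (∑ j ∈ Finset.range (N+1), p j * s (m-j)) / P := by
    intro m hm
    rw [min_eq_right hm, hrefl m]
    congr 1
    symm
    apply Finset.sum_subset (Finset.range_subset_range.mpr (by omega))
    intro j hj hj'
    simp only [Finset.mem_range] at hj hj'
    rw [hzero j (by omega)]
    ring
  constructor
  · -- forward direction
    intro hs
    have h1 : Tendsto (fun m => ∑ j ∈ Finset.range (N+1), p j * s (m-j)) atTop
        (nhds (∑ j ∈ Finset.range (N+1), p j * σ)) := by
      apply tendsto_finset_sum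
      intro j _
      exact (hs.comp (Filter.tendsto_sub_atTop_nat j)).const_mul (p j)
    have h2 := h1.div_const P
    have h3 : (∑ j ∈ Finset.range (N+1), p j * σ) / P = σ := by
      rw [← Finset.sum_mul, ← hPdef, mul_comm, mul_div_assoc, div_self hP.ne', mul_one]
    rw [h3] at h2
    apply h2.congr'
    filter_upwards [Filter.eventually_atTop.mpr ⟨N, fun m hm => hEq m hm⟩] with m hm
    exact hm.symm
  · -- reverse direction
    intro ht
    set q : ℕ → ℝ := fun m => ∑ n ∈ Finset.range (m+1), p (m-n) * s n with hqdef
    have hq : Tendsto q atTop (nhds (P * σ)) := by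
      have h1 := ht.mul_const P
      rw [mul_comm σ P] at h1
      apply h1.congr'
      filter_upwards [Filter.eventually_atTop.mpr ⟨N, fun m (hm : N ≤ m) => hm⟩] with m hm
      rw [hEq m hm, div_mul_cancel₀ _ hP.ne']
      show _ = ∑ n ∈ Finset.range (m+1), p (m-n) * s n
      rw [hrefl m]
      apply Finset.sum_subset (Finset.range_subset_range.mpr (by omega))
      intro j hj hj'
      simp only [Finset.mem_range] at hj hj'
      rw [hzero j (by omega)]
      ring
    -- summability of the inverse coefficients
    set wgt : ℕ → ℝ := fun j => (p j - p (j+1)) / p 0 with hwgtdef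
    have hw : ∀ j, j ≤ N → 0 < wgt j :=
      fun j hj => div_pos (nrl_gap_pos N p hdec hpos hzero j hj) hp0
    have hw1 : ∑ j ∈ Finset.range (N+1), wgt j = 1 := by
      rw [hwgtdef, ← Finset.sum_div, nrl_gap_sum N p hzero, div_self h0]
    have hrec : ∀ k, N ≤ k → nrlB p (k+1) = ∑ j ∈ Finset.range (N+1), wgt j * nrlB p (k - j) :=
      fun k hk => nrl_rec_trunc N p h0 hzero k hk
    have hsum1 : Summable (fun k => |nrlB p (k+1) - nrlB p k|) :=
      nrl_windows N wgt (nrlB p) hw hw1 hrec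
    have hdiff : ∀ k, nrlB p (k+1) - nrlB p k = nrlC p (k+1) := by
      intro k
      rw [nrlB, nrlB, Finset.sum_range_succ]
      ring_nf
    have hsum2 : Summable (fun k => |nrlC p (k+1)|) := by
      apply hsum1.congr
      intro k
      rw [hdiff k]
    have habs : Summable (fun k => |nrlC p k|) :=
      (summable_nat_add_iff 1).mp hsum2
    have hcsum : Summable (nrlC p) := habs.of_abs
    set β : ℝ := ∑' k, nrlC p k with hβdef
    have hβ : Tendsto (fun m => ∑ k ∈ Finset.range (m+1), nrlC p k) atTop (nhds β) :=
      hcsum.hasSum.tendsto_sum_nat.comp (Filter.tendsto_add_atTop_nat 1)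
    have hβ' : Tendsto (nrlB p) atTop (nhds β) := hβ
    -- identification of the limit of b : β * P = 1
    have hβP : β * P = 1 := by
      have h1 : Tendsto (fun k => ∑ j ∈ Finset.range (N+1), p j * nrlB p (k - j)) atTop
          (nhds (∑ j ∈ Finset.range (N+1), p j * β)) := by
        apply tendsto_finset_sum
        intro j _
        exact (hβ'.comp (Filter.tendsto_sub_atTop_nat j)).const_mul (p j)
      have h2 : Tendsto (fun _ : ℕ => (1:ℝ)) atTop (nhds 1) := tendsto_const_nhds
      have h3 : (∑ j ∈ Finset.range (N+1), p j * β) = 1 := by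
        apply tendsto_nhds_unique _ h2
        apply h1.congr'
        filter_upwards [Filter.eventually_atTop.mpr ⟨N, fun k (hk : N ≤ k) => hk⟩] with k hk
        exact nrl_A_trunc N p h0 hzero k hk
      rw [← h3, ← Finset.sum_mul, ← hPdef]
      ring
    have hmain := nrl_conv_tendsto (nrlC p) q (P * σ) β habs hq hβ
    have hval : β * (P * σ) = σ := by
      rw [← mul_assoc, hβP, one_mul]
    rw [hval] at hmain
    apply hmain.congr
    intro m
    exact (nrl_inv_identity p s h0 m).symm
end
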